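/- arXiv:2409.11079 — 7 statements merged into one kernel-verified Lean document; each statement's English description precedes it below -/
import Mathlib

section
/- For every integer k ≥ 1 and every real ε > 0, there exist a metric space (X,d) with exactly n = 2k+1 points and a proper bipartition X = R ∪ B such that mst(R) + mst(B) ≥ ((3 − 4/(n−1))/(1+ε)) · mst(X). -/
open scoped Classical

namespace MstAux


open SimpleGraph Finset

variable {V : Type*}

/-- Graph defined by a parent function. -/
def parentGraph (p : V → V) : SimpleGraph V where
  Adj x y := x ≠ y ∧ (p x = y ∨ p y = x)
  symm := by constructor; intro x y ⟨h1, h2⟩; exact ⟨h1.symm, h2.symm⟩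
  loopless := by constructor; intro x ⟨h1, _⟩; exact h1 rfl

variable (p : V → V) (r : V → ℕ) (root : V)

lemma parent_ne (hr : ∀ v, v ≠ root → r (p v) < r v) (v : V) (hv : v ≠ root) : v ≠ p v := by
  intro h
  have := hr v hv
  rw [← h] at this
  omega

lemma adj_parent (hr : ∀ v, v ≠ root → r (p v) < r v) (v : V) (hv : v ≠ root) :
    (parentGraph p).Adj v (p v) :=
  ⟨parent_ne p r root hr v hv, Or.inl rfl⟩

lemma reachable_root (hr : ∀ v, v ≠ root → r (p v) < r v) (v : V) :
    (parentGraph p).Reachable v root := by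
  have key : ∀ n v, r v ≤ n → (parentGraph p).Reachable v root := by
    intro n
    induction n with
    | zero =>
      intro v hv
      by_cases h : v = root
      · exact h ▸ Reachable.refl _
      · exact absurd (hr v h) (by omega)
    | succ n ih =>
      intro v hv
      by_cases h : v = root
      · exact h ▸ Reachable.refl _
      · exact ((adj_parent p r root hr v h).reachable).trans
          (ih (p v) (by have := hr v h; omega))
  exact key (r v) v le_rfl

lemma parentGraph_connected (hr : ∀ v, v ≠ root → r (p v) < r v) :
    (parentGraph p).Connected := by
  haveI : Nonempty V := ⟨root⟩
  exact Connected.mk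
    (fun u v => (reachable_root p r root hr u).trans (reachable_root p r root hr v).symm)

lemma max_adj (hroot : p root = root) (hr : ∀ v, v ≠ root → r (p v) < r v)
    {u x : V} (hadj : (parentGraph p).Adj u x) (hx : r x ≤ r u) : p u = x := by
  obtain ⟨hne, h | h⟩ := hadj
  · exact h
  · exfalso
    have hxr : x ≠ root := by
      rintro rfl
      rw [hroot] at h
      exact hne h.symm
    have := hr x hxr
    rw [h] at this
    omega

lemma parentGraph_isAcyclic (hroot : p root = root) (hr : ∀ v, v ≠ root → r (p v) < r v) :
    (parentGraph p).IsAcyclic := by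
  intro v c hc
  -- pick a vertex of maximal rank on the cycle
  obtain ⟨u, hu, hmax⟩ : ∃ u ∈ c.support, ∀ x ∈ c.support, r x ≤ r u := by
    obtain ⟨u, hu, hmax⟩ := Finset.exists_max_image c.support.toFinset r
      ⟨v, by simp [Walk.start_mem_support]⟩
    exact ⟨u, by simpa using hu, fun x hx => hmax x (by simpa using hx)⟩
  have hc' := hc.rotate hu
  set c' := c.rotate u hu with hc'def
  have hsupp : ∀ x, x ∈ c'.support → r x ≤ r u := by
    intro x hx
    rw [Walk.support_eq_cons] at hx
    rcases List.mem_cons.1 hx with rfl | hx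
    · exact le_rfl
    · exact hmax x (List.mem_of_mem_tail ((Walk.support_rotate c u hu).mem_iff.1 hx))
  clear_value c'
  cases c' with
  | nil => exact hc'.ne_nil rfl
  | @cons _ b _ h q =>
    rw [Walk.cons_isCycle_iff] at hc'
    obtain ⟨hq, hne⟩ := hc'
    have hbu : u ≠ b := h.ne
    obtain ⟨d, hd, q', hq'⟩ := Walk.exists_eq_cons_of_ne hbu q.reverse
    have hdmem : s(u, d) ∈ q.edges := by
      have : s(u, d) ∈ q.reverse.edges := by rw [hq']; simp
      rwa [Walk.edges_reverse, List.mem_reverse] at this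
    have hdb : d ≠ b := by
      rintro rfl
      exact hne (Sym2.eq_swap ▸ hdmem)
    have hbsupp : b ∈ (Walk.cons h q).support := by
      simp [Walk.support_cons, Walk.start_mem_support]
    have hdsupp : d ∈ (Walk.cons h q).support := by
      have : d ∈ q.reverse.support := by rw [hq']; simp [Walk.start_mem_support]
      rw [Walk.support_reverse, List.mem_reverse] at this
      simp [Walk.support_cons, this]
    have h1 : p u = b := max_adj p r root hroot hr h (hsupp b hbsupp)
    have h2 : p u = d :=
      max_adj p r root hroot hr (Walk.adj_of_mem_edges (Walk.cons h q) (by simp [hdmem]))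
        (hsupp d hdsupp)
    exact hdb (h2.symm.trans h1)

lemma parentGraph_isTree (hroot : p root = root) (hr : ∀ v, v ≠ root → r (p v) < r v) :
    (parentGraph p).IsTree :=
  ⟨parentGraph_connected p r root hr, parentGraph_isAcyclic p r root hroot hr⟩


lemma parentGraph_edgeFinset [Fintype V] [DecidableEq V] (hroot : p root = root)
    (hr : ∀ v, v ≠ root → r (p v) < r v) :
    (parentGraph p).edgeFinset = (Finset.univ.erase root).image (fun v => s(v, p v)) := by
  ext e
  induction e with
  | _ x y =>
    simp only [mem_edgeFinset, mem_edgeSet, Finset.mem_image, Finset.mem_erase,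
      Finset.mem_univ, and_true]
    constructor
    · rintro ⟨hne, h | h⟩
      · refine ⟨x, ?_, by rw [h]⟩
        rintro rfl
        rw [hroot] at h
        exact hne h
      · refine ⟨y, ?_, by rw [h, Sym2.eq_swap]⟩
        rintro rfl
        rw [hroot] at h
        exact hne h.symm
    · rintro ⟨v, hv, he⟩
      rw [Sym2.eq_iff] at he
      rcases he with ⟨h1, h2⟩ | ⟨h1, h2⟩
      · subst h1; subst h2
        exact ⟨parent_ne p r root hr _ hv, Or.inl rfl⟩
      · subst h2; subst h1
        exact ⟨(parent_ne p r root hr _ hv).symm, Or.inr rfl⟩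

lemma parent_inj_on [Fintype V] [DecidableEq V] (hr : ∀ v, v ≠ root → r (p v) < r v) :
    ∀ x ∈ Finset.univ.erase root, ∀ y ∈ Finset.univ.erase root,
      s(x, p x) = s(y, p y) → x = y := by
  intro x hx y hy h
  rw [Sym2.eq_iff] at h
  rcases h with ⟨h1, _⟩ | ⟨h1, h2⟩
  · exact h1
  · exfalso
    have hx' := hr x (Finset.mem_erase.1 hx).1
    have hy' := hr y (Finset.mem_erase.1 hy).1
    rw [h2] at hx'; rw [← h1] at hy'
    omega




abbrev Pt (k : ℕ) := Option (Fin k × Bool)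

noncomputable def phi {k : ℕ} (δ : ℝ) : Pt k → ℝ
  | none => 0
  | some (_, false) => 1
  | some (_, true) => 1 + δ

def branch {k : ℕ} : Pt k → Option (Fin k)
  | none => none
  | some (i, _) => some i

noncomputable def sd {k : ℕ} (δ : ℝ) (x y : Pt k) : ℝ :=
  if branch x = branch y then |phi δ x - phi δ y| else phi δ x + phi δ y

lemma phi_nonneg {k : ℕ} {δ : ℝ} (hδ : 0 ≤ δ) : ∀ x : Pt k, 0 ≤ phi δ x
  | none => le_refl _
  | some (_, false) => by norm_num [phi]
  | some (_, true) => by simp only [phi]; linarith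

noncomputable def spiderMetric (k : ℕ) (δ : ℝ) (hδ : 0 < δ) : MetricSpace (Pt k) where
  dist := sd δ
  dist_self x := by simp [sd]
  dist_comm x y := by
    show sd δ x y = sd δ y x
    by_cases h : branch x = branch y
    · rw [sd, sd, if_pos h, if_pos h.symm, abs_sub_comm]
    · rw [sd, sd, if_neg h, if_neg (fun h' => h h'.symm), add_comm]
  dist_triangle x y z := by
    show sd δ x z ≤ sd δ x y + sd δ y z
    have nn := phi_nonneg (k := k) hδ.le
    unfold sd
    by_cases h1 : branch x = branch y
    · by_cases h2 : branch y = branch z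
      · rw [if_pos h1, if_pos h2, if_pos (h1.trans h2)]
        exact abs_sub_le _ _ _
      · rw [if_pos h1, if_neg h2, if_neg (fun h => h2 (h1.symm.trans h))]
        have := le_abs_self (phi δ x - phi δ y)
        linarith [nn y]
    · by_cases h2 : branch y = branch z
      · rw [if_neg h1, if_pos h2, if_neg (fun h => h1 (h.trans h2.symm))]
        have := neg_abs_le (phi δ y - phi δ z)
        linarith [nn y]
      · by_cases h3 : branch x = branch z
        · rw [if_neg h1, if_neg h2, if_pos h3]
          rcases abs_cases (phi δ x - phi δ z) with ⟨h, _⟩ | ⟨h, _⟩ <;>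
            · rw [h]; linarith [nn x, nn y, nn z]
        · rw [if_neg h1, if_neg h2, if_neg h3]
          linarith [nn y]
  eq_of_dist_eq_zero := by
    intro x y h
    replace h : sd δ x y = 0 := h
    rcases x with _ | ⟨i, bi⟩ <;> rcases y with _ | ⟨j, bj⟩
    · rfl
    · exfalso
      rw [sd, if_neg (by simp [branch])] at h
      cases bj <;> simp [phi] at h <;> linarith
    · exfalso
      rw [sd, if_neg (by simp [branch])] at h
      cases bi <;> simp [phi] at h <;> linarith
    · by_cases hij : i = j
      · subst hij
        have hb : branch (k := k) (some (i, bi)) = branch (some (i, bj)) := by simp [branch]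
        rw [sd, if_pos hb] at h
        cases bi <;> cases bj
        · rfl
        · exfalso; simp [phi] at h; linarith
        · exfalso; simp [phi] at h; linarith
        · rfl
      · exfalso
        rw [sd, if_neg (by simp [branch, hij])] at h
        cases bi <;> cases bj <;> simp [phi] at h <;> linarith


end MstAux

/-- The length of a minimum spanning tree of a finite point set `S` in a metric space:
the infimum, over all trees with vertex set `S`, of the sum of distances over the edges. -/
noncomputable def mst {X : Type*} [MetricSpace X] (S : Finset X) : ℝ :=
  sInf {c : ℝ | ∃ G : SimpleGraph S, G.IsTree ∧
    c = ∑ᶠ e ∈ G.edgeSet,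
      Sym2.lift ⟨fun (u v : S) => dist (u : X) (v : X), fun _ _ => dist_comm _ _⟩ e}




section MstLemmas
open SimpleGraph Finset MstAux


variable {X : Type*} [MetricSpace X]

noncomputable def eCost (S : Finset X) : Sym2 S → ℝ :=
  Sym2.lift ⟨fun (u v : S) => dist (u : X) (v : X), fun _ _ => dist_comm _ _⟩

lemma eCost_nonneg (S : Finset X) (e : Sym2 S) : 0 ≤ eCost S e := by
  induction e with
  | _ x y => exact dist_nonneg

lemma finsum_edge (S : Finset X) (G : SimpleGraph S) :
    (∑ᶠ e ∈ G.edgeSet, eCost S e) = ∑ e ∈ G.edgeFinset, eCost S e := by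
  rw [← coe_edgeFinset, finsum_mem_coe_finset]

lemma cost_nonneg (S : Finset X) (G : SimpleGraph S) :
    0 ≤ ∑ᶠ e ∈ G.edgeSet, eCost S e := by
  rw [finsum_edge]
  exact Finset.sum_nonneg fun e _ => eCost_nonneg S e

lemma mst_bddBelow (S : Finset X) :
    ∀ c ∈ {c : ℝ | ∃ G : SimpleGraph S, G.IsTree ∧ c = ∑ᶠ e ∈ G.edgeSet, eCost S e}, 0 ≤ c := by
  rintro c ⟨G, _, rfl⟩
  exact cost_nonneg S G

lemma mst_eq (S : Finset X) :
    mst S = sInf {c : ℝ | ∃ G : SimpleGraph S, G.IsTree ∧ c = ∑ᶠ e ∈ G.edgeSet, eCost S e} := rfl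

/-- Upper bound on `mst` via an explicit parent-function spanning tree. -/
lemma mst_le_parent (S : Finset X) (p : S → S) (r : S → ℕ) (root : S)
    (hroot : p root = root) (hr : ∀ v, v ≠ root → r (p v) < r v) :
    mst S ≤ ∑ v : S, dist (v : X) ((p v : S) : X) := by
  refine le_trans ?_ (Finset.sum_le_sum_of_subset_of_nonneg
    (Finset.erase_subset root Finset.univ) (fun _ _ _ => dist_nonneg))
  rw [mst_eq]
  have hcost : (∑ᶠ e ∈ (parentGraph p).edgeSet, eCost S e)
      = ∑ v ∈ Finset.univ.erase root, dist (v : X) ((p v : S) : X) := by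
    rw [finsum_edge, parentGraph_edgeFinset p r root hroot hr,
      Finset.sum_image (parent_inj_on p r root hr)]
    refine Finset.sum_congr rfl fun x _ => ?_
    simp [eCost]
  refine csInf_le ⟨0, fun c hc => mst_bddBelow S c hc⟩ ?_
  exact ⟨parentGraph p, parentGraph_isTree p r root hroot hr, hcost.symm⟩

/-- Lower bound on `mst` when all pairwise distances are at least `a`. -/
lemma le_mst (S : Finset X) (hS : S.Nonempty) (a : ℝ) (ha : 0 ≤ a)
    (hd : ∀ x ∈ S, ∀ y ∈ S, x ≠ y → a ≤ dist x y) :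
    a * ((S.card : ℝ) - 1) ≤ mst S := by
  rw [mst_eq]
  obtain ⟨v0, hv0⟩ := hS
  refine le_csInf ?_ ?_
  · -- nonempty: star tree
    refine ⟨_, ⟨parentGraph (fun _ : S => ⟨v0, hv0⟩),
      parentGraph_isTree _ (fun v => if v = ⟨v0, hv0⟩ then 0 else 1) ⟨v0, hv0⟩ rfl ?_, rfl⟩⟩
    intro v hv
    simp [hv]
  · rintro c ⟨G, hG, rfl⟩
    rw [finsum_edge]
    have hcard : G.edgeFinset.card + 1 = S.card := by
      rw [hG.card_edgeFinset, Fintype.card_coe]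
    have hterm : ∀ e ∈ G.edgeFinset, a ≤ eCost S e := by
      intro e he
      induction e with
      | _ x y =>
        have hadj : G.Adj x y := mem_edgeFinset.1 he
        have hxy : (x : X) ≠ (y : X) := fun h => hadj.ne (Subtype.ext h)
        exact hd x x.2 y y.2 hxy
    have := Finset.card_nsmul_le_sum G.edgeFinset (eCost S) a hterm
    rw [nsmul_eq_mul] at this
    have hc : (G.edgeFinset.card : ℝ) = (S.card : ℝ) - 1 := by
      have : (G.edgeFinset.card : ℝ) + 1 = (S.card : ℝ) := by exact_mod_cast hcard
      linarith
    rw [hc] at this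
    linarith [this]

end MstLemmas


namespace MstAux

/-- parent function for the spanning tree of the spider -/
def pf {k : ℕ} : Pt k → Pt k
  | none => none
  | some (i, false) => none
  | some (i, true) => some (i, false)

def rf {k : ℕ} : Pt k → ℕ
  | none => 0
  | some (_, false) => 1
  | some (_, true) => 2

end MstAux

open MstAux Finset

theorem exists_metric_space_mst_ratio_near_three (k : ℕ) (hk : 1 ≤ k) (ε : ℝ) (hε : 0 < ε) :
    ∃ (X : Type) (_ : MetricSpace X) (S : Finset X),
      S.card = 2 * k + 1 ∧ (∀ x : X, x ∈ S) ∧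
      ∃ R B : Finset X, R.Nonempty ∧ B.Nonempty ∧ Disjoint R B ∧ R ∪ B = S ∧
        ((3 - 4 / (((2 * k + 1 : ℕ) : ℝ) - 1)) / (1 + ε)) * mst S ≤ mst R + mst B := by
  classical
  letI : MetricSpace (Pt k) := spiderMetric k ε hε
  haveI : NeZero k := ⟨by omega⟩
  have hcardU : (Finset.univ : Finset (Pt k)).card = 2 * k + 1 := by
    simp [Finset.card_univ]
    omega
  -- distance evaluation lemmas
  have d1 : ∀ i : Fin k, dist (some (i, false) : Pt k) (none : Pt k) = 1 := by
    intro i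
    show sd ε _ _ = 1
    rw [sd, if_neg (by simp [branch])]
    simp [phi]
  have d2 : ∀ i : Fin k, dist (some (i, true) : Pt k) (some (i, false) : Pt k) = ε := by
    intro i
    show sd ε _ _ = ε
    rw [sd, if_pos (by simp [branch])]
    simp only [phi]
    rw [show (1 : ℝ) + ε - 1 = ε by ring, abs_of_pos hε]
  have dRR : ∀ i j : Fin k, i ≠ j →
      dist (some (i, false) : Pt k) (some (j, false) : Pt k) = 2 := by
    intro i j hij
    show sd ε _ _ = 2
    rw [sd, if_neg (by simp [branch, hij])]
    simp [phi]
    norm_num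
  have dNB : ∀ j : Fin k, dist (none : Pt k) (some (j, true) : Pt k) = 1 + ε := by
    intro j
    show sd ε _ _ = 1 + ε
    rw [sd, if_neg (by simp [branch])]
    simp [phi]
  have dBB : ∀ i j : Fin k, i ≠ j →
      dist (some (i, true) : Pt k) (some (j, true) : Pt k) = 2 + 2 * ε := by
    intro i j hij
    show sd ε _ _ = 2 + 2 * ε
    rw [sd, if_neg (by simp [branch, hij])]
    simp [phi]
    ring
  refine ⟨Pt k, inferInstance, Finset.univ, hcardU, fun x => Finset.mem_univ x, ?_⟩
  set S : Finset (Pt k) := Finset.univ with hSdef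
  set R : Finset (Pt k) := Finset.univ.image (fun i : Fin k => (some (i, false) : Pt k))
    with hRdef
  set B : Finset (Pt k) := S \ R with hBdef
  have hinj : Function.Injective (fun i : Fin k => (some (i, false) : Pt k)) := by
    intro a b h
    simpa using h
  have hRcard : R.card = k := by
    rw [hRdef, Finset.card_image_of_injective _ hinj, Finset.card_univ, Fintype.card_fin]
  have hRB : Disjoint R B := Finset.disjoint_sdiff
  have hRsub : R ⊆ S := Finset.subset_univ _
  have hUnion : R ∪ B = S := Finset.union_sdiff_of_subset hRsub
  have hBcard : B.card = k + 1 := by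
    rw [hBdef, Finset.card_sdiff_of_subset hRsub, hRcard, hcardU]
    omega
  have hmemB : ∀ x : Pt k, x ∈ B ↔ (x = none ∨ ∃ j : Fin k, x = some (j, true)) := by
    intro x
    rw [hBdef, Finset.mem_sdiff]
    constructor
    · rintro ⟨-, hx⟩
      rcases x with _ | ⟨j, b⟩
      · exact Or.inl rfl
      · cases b
        · exact absurd (Finset.mem_image.2 ⟨j, Finset.mem_univ _, rfl⟩) hx
        · exact Or.inr ⟨j, rfl⟩
    · rintro (rfl | ⟨j, rfl⟩) <;>
        refine ⟨Finset.mem_univ _, fun hx => ?_⟩ <;>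
        · obtain ⟨i, -, h⟩ := Finset.mem_image.1 hx
          simp at h
  -- upper bound for mst S
  have hUB : mst S ≤ (k : ℝ) * (1 + ε) := by
    have hroot : (fun v : S => (⟨pf v.1, Finset.mem_univ _⟩ : S))
        (⟨none, Finset.mem_univ _⟩ : S) = ⟨none, Finset.mem_univ _⟩ := rfl
    have hr : ∀ v : S, v ≠ (⟨none, Finset.mem_univ _⟩ : S) →
        rf ((⟨pf v.1, Finset.mem_univ _⟩ : S)).1 < rf v.1 := by
      rintro ⟨x, hx⟩ hv
      rcases x with _ | ⟨i, b⟩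
      · exact absurd (Subtype.ext rfl) hv
      · cases b <;> simp [pf, rf]
    have h := mst_le_parent S (fun v : S => (⟨pf v.1, Finset.mem_univ _⟩ : S))
      (fun v : S => rf v.1) (⟨none, Finset.mem_univ _⟩ : S) hroot hr
    refine h.trans (le_of_eq ?_)
    have hstep : (∑ v : S, dist (v : Pt k) ((⟨pf v.1, Finset.mem_univ _⟩ : S) : Pt k))
        = ∑ x ∈ S, dist x (pf x) := by
      rw [Finset.univ_eq_attach]
      exact Finset.sum_attach S (fun x : Pt k => dist x (pf x))
    rw [hstep, hSdef]
    rw [show (∑ x : Pt k, dist x (pf x)) = dist (none : Pt k) (pf (none : Pt k))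
        + ∑ q : Fin k × Bool, dist (some q : Pt k) (pf (some q)) from Fintype.sum_option _,
      Fintype.sum_prod_type]
    have hbool : ∀ i : Fin k, (∑ b : Bool, dist (some (i, b) : Pt k) (pf (some (i, b))))
        = 1 + ε := by
      intro i
      rw [Fintype.sum_bool]
      show dist (some (i, true) : Pt k) (some (i, false) : Pt k)
        + dist (some (i, false) : Pt k) (none : Pt k) = 1 + ε
      rw [d1, d2]; ring
    rw [Finset.sum_congr rfl (fun i _ => hbool i)]
    show dist (none : Pt k) (none : Pt k) + _ = _
    rw [dist_self, Finset.sum_const, Finset.card_univ, Fintype.card_fin, nsmul_eq_mul]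
    ring
  -- lower bound for mst R
  have hRne : R.Nonempty := ⟨some (⟨0, by omega⟩, false), Finset.mem_image.2
    ⟨⟨0, by omega⟩, Finset.mem_univ _, rfl⟩⟩
  have hBne : B.Nonempty := ⟨none, (hmemB none).2 (Or.inl rfl)⟩
  have hLR : 2 * ((k : ℝ) - 1) ≤ mst R := by
    have := le_mst R hRne 2 (by norm_num) ?_
    · rwa [hRcard] at this
    · intro x hx y hy hxy
      obtain ⟨i, -, rfl⟩ := Finset.mem_image.1 hx
      obtain ⟨j, -, rfl⟩ := Finset.mem_image.1 hy
      have hij : i ≠ j := fun h => hxy (by rw [h])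
      rw [dRR i j hij]
  have hLB : (1 + ε) * (k : ℝ) ≤ mst B := by
    have := le_mst B hBne (1 + ε) (by linarith) ?_
    · rw [hBcard] at this
      have h1 : ((k + 1 : ℕ) : ℝ) - 1 = (k : ℝ) := by push_cast; ring
      rwa [h1] at this
    · intro x hx y hy hxy
      rcases (hmemB x).1 hx with rfl | ⟨i, rfl⟩ <;> rcases (hmemB y).1 hy with rfl | ⟨j, rfl⟩
      · exact absurd rfl hxy
      · rw [dNB j]
      · rw [dist_comm, dNB i]
      · have hij : i ≠ j := fun h => hxy (by rw [h])
        rw [dBB i j hij]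
        linarith
  -- final arithmetic
  refine ⟨R, B, hRne, hBne, hRB, ?_, ?_⟩
  · ext x
    by_cases hx : x ∈ R <;> simp [hBdef, hSdef, hx]
  have hK : (1 : ℝ) ≤ (k : ℝ) := by exact_mod_cast hk
  have hden : ((2 * k + 1 : ℕ) : ℝ) - 1 = 2 * (k : ℝ) := by push_cast; ring
  rw [hden]
  have hC0 : 0 ≤ (3 - 4 / (2 * (k : ℝ))) / (1 + ε) := by
    apply div_nonneg _ (by linarith)
    have h2 : 4 / (2 * (k : ℝ)) ≤ 2 := by
      rw [div_le_iff₀ (by linarith)]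
      linarith
    linarith
  have step1 : (3 - 4 / (2 * (k : ℝ))) / (1 + ε) * mst S
      ≤ (3 - 4 / (2 * (k : ℝ))) / (1 + ε) * ((k : ℝ) * (1 + ε)) :=
    mul_le_mul_of_nonneg_left hUB hC0
  have step2 : (3 - 4 / (2 * (k : ℝ))) / (1 + ε) * ((k : ℝ) * (1 + ε))
      = 3 * (k : ℝ) - 2 := by
    have hk0 : (k : ℝ) ≠ 0 := by linarith
    have he0 : (1 : ℝ) + ε ≠ 0 := by linarith
    field_simp
    ring
  have step3 : (3 - 4 / (2 * (k : ℝ))) / (1 + ε) * mst S ≤ 3 * (k : ℝ) - 2 := by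
    rw [← step2]; exact step1
  have hLB' : (k : ℝ) + ε * (k : ℝ) ≤ mst B := by
    have : (1 + ε) * (k : ℝ) = (k : ℝ) + ε * (k : ℝ) := by ring
    linarith [hLB]
  have hek : 0 ≤ ε * (k : ℝ) := mul_nonneg hε.le (by positivity)
  linarith [step3, hLR, hLB', hek]
end

section
/- Let T be a tree on n vertices with n ≥ 5, equipped with nonnegative real edge weights, let W be the total weight of all edges of T, and let W_L be the total weight of those edges of T that are incident to at least one leaf of T. Then there exist (not necessarily distinct) non-leaf vertices u and v of T such that the total weight of the unique u–v path in T, plus W_L, is at least (4/(n−1)) · W. -/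
open scoped Classical
open SimpleGraph Finset

namespace NonleafPathHeavy

set_option linter.unusedSectionVars false

section
variable {V : Type*} [Fintype V] {G : SimpleGraph V} [DecidableRel G.Adj]

private lemma side_step {a b u v : V} (h : G.Adj u v) (hne : ¬ s(u,v) = s(a,b)) :
    (G.deleteEdges {s(a,b)}).Adj u v := by
  simp [SimpleGraph.deleteEdges_adj, h, hne]

private lemma reach_side_aux {a b : V} :
    ∀ {x y : V}, G.Walk x y →
      ((G.deleteEdges {s(a,b)}).Reachable y a ∨ (G.deleteEdges {s(a,b)}).Reachable y b) →
      ((G.deleteEdges {s(a,b)}).Reachable x a ∨ (G.deleteEdges {s(a,b)}).Reachable x b) := by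
  intro x y wlk
  induction wlk with
  | nil => exact id
  | @cons u v _ h q ih =>
    intro hy
    rcases ih hy with hv | hv
    · by_cases he : s(u, v) = s(a, b)
      · rw [Sym2.eq_iff] at he
        rcases he with ⟨rfl, rfl⟩ | ⟨rfl, rfl⟩
        · exact Or.inl (Reachable.refl _)
        · exact Or.inr (Reachable.refl _)
      · exact Or.inl ((side_step h he).reachable.trans hv)
    · by_cases he : s(u, v) = s(a, b)
      · rw [Sym2.eq_iff] at he
        rcases he with ⟨rfl, rfl⟩ | ⟨rfl, rfl⟩
        · exact Or.inl (Reachable.refl _)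
        · exact Or.inr (Reachable.refl _)
      · exact Or.inr ((side_step h he).reachable.trans hv)

lemma reach_side (hT : G.IsTree) (a b : V) (x : V) :
    (G.deleteEdges {s(a,b)}).Reachable x a ∨ (G.deleteEdges {s(a,b)}).Reachable x b := by
  obtain ⟨wlk⟩ := hT.isConnected x a
  exact reach_side_aux wlk (Or.inl (Reachable.refl _))

lemma not_reach_ab (hT : G.IsTree) {a b : V} (hab : G.Adj a b) :
    ¬ (G.deleteEdges {s(a,b)}).Reachable a b := by
  have hb := isAcyclic_iff_forall_edge_isBridge.mp hT.2 (G.mem_edgeSet.mpr hab)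
  exact isBridge_iff.mp hb

lemma side_iff_of_not_mem {a b x y : V} (q : G.Walk x y) (he : s(a,b) ∉ q.edges) :
    ((G.deleteEdges {s(a,b)}).Reachable x a ↔ (G.deleteEdges {s(a,b)}).Reachable y a) := by
  have : (G.deleteEdges {s(a,b)}).Reachable x y :=
    ⟨q.toDeleteEdges {s(a,b)} (fun e' he' h => by simp at h; exact he (h ▸ he'))⟩
  exact ⟨fun h => this.symm.trans h, fun h => this.trans h⟩

lemma edge_mem_path_iff (hT : G.IsTree) {a b : V} (hab : G.Adj a b) :
    ∀ {x y : V} (q : G.Walk x y), q.IsPath →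
      (s(a,b) ∈ q.edges ↔
        ¬((G.deleteEdges {s(a,b)}).Reachable x a ↔ (G.deleteEdges {s(a,b)}).Reachable y a)) := by
  intro x y q
  induction q with
  | nil => simp
  | @cons u v _ h q ih =>
    intro hp
    rw [SimpleGraph.Walk.cons_isPath_iff] at hp
    by_cases he : s(u, v) = s(a, b)
    · have hnm : s(a,b) ∉ q.edges := by
        intro hc
        exact hp.2 (SimpleGraph.Walk.fst_mem_support_of_mem_edges q (he ▸ hc))
      have hvy := side_iff_of_not_mem q hnm
      simp only [SimpleGraph.Walk.edges_cons, List.mem_cons, he, true_or, true_iff]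
      rw [Sym2.eq_iff] at he
      have hSa : (G.deleteEdges {s(a,b)}).Reachable a a := Reachable.refl _
      have hSb : ¬ (G.deleteEdges {s(a,b)}).Reachable b a :=
        fun hc => not_reach_ab hT hab hc.symm
      rcases he with ⟨rfl, rfl⟩ | ⟨rfl, rfl⟩
      · tauto
      · tauto
    · have hGr : (G.deleteEdges {s(a,b)}).Adj u v := by
        simp [SimpleGraph.deleteEdges_adj, h, he]
      have huv : ((G.deleteEdges {s(a,b)}).Reachable u a ↔ (G.deleteEdges {s(a,b)}).Reachable v a) :=
        ⟨fun hc => hGr.symm.reachable.trans hc, fun hc => hGr.reachable.trans hc⟩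
      simp only [SimpleGraph.Walk.edges_cons, List.mem_cons, he, false_or]
      rw [ih hp.1]
      tauto

variable (p : ∀ x y : V, G.Walk x y)

lemma succ_eq (hT : G.IsTree) (hp : ∀ x y, (p x y).IsPath) {x y b : V} (hxy : G.Adj x y)
    (hlen : (p y b).length ≤ (p x b).length) : p x b = SimpleGraph.Walk.cons hxy (p y b) := by
  by_cases hx : x ∈ (p y b).support
  · exfalso
    have hspec := (p y b).take_spec hx
    have hq2 : ((p y b).dropUntil x hx) = p x b :=
      (hT.existsUnique_path x b).unique ((hp y b).dropUntil hx) (hp x b)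
    have hlen2 : ((p y b).takeUntil x hx).length + ((p y b).dropUntil x hx).length
        = (p y b).length := by
      rw [← SimpleGraph.Walk.length_append, hspec]
    have h1 : 1 ≤ ((p y b).takeUntil x hx).length := by
      rcases Nat.eq_zero_or_pos ((p y b).takeUntil x hx).length with h0 | h0
      · exact absurd (SimpleGraph.Walk.eq_of_length_eq_zero h0) hxy.ne'
      · exact h0
    rw [hq2] at hlen2
    omega
  · exact (hT.existsUnique_path x b).unique (hp x b)
      ((SimpleGraph.Walk.cons_isPath_iff hxy (p y b)).2 ⟨hp y b, hx⟩)

lemma cons_inj' {x y z b : V} (h1 : G.Adj x y) (h2 : G.Adj x z)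
    (q1 : G.Walk y b) (q2 : G.Walk z b)
    (heq : SimpleGraph.Walk.cons h1 q1 = SimpleGraph.Walk.cons h2 q2) : y = z := by
  have h := congrArg SimpleGraph.Walk.support heq
  simp only [SimpleGraph.Walk.support_cons] at h
  rw [SimpleGraph.Walk.support_eq_cons q1, SimpleGraph.Walk.support_eq_cons q2] at h
  simp only [List.cons.injEq] at h
  exact h.2.1

lemma claimD (hT : G.IsTree) (hp : ∀ x y, (p x y).IsPath) {a b : V} (hab : G.Adj a b)
    (ha : G.degree a ≠ 1) :
    ∃ x, (G.degree x ≠ 1 ∧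
        ((G.neighborFinset x) ∩ (univ.filter (fun v => G.degree v ≠ 1))).card ≤ 1)
      ∧ (G.deleteEdges {s(a,b)}).Reachable x a := by
  set Grm := G.deleteEdges {s(a,b)} with hGrm
  set I : Finset V := univ.filter (fun v => G.degree v ≠ 1) with hI
  set A : Finset V := I.filter (fun x => Grm.Reachable x a) with hA
  have haA : a ∈ A :=
    Finset.mem_filter.mpr ⟨Finset.mem_filter.mpr ⟨Finset.mem_univ a, ha⟩, Reachable.refl a⟩
  obtain ⟨x, hxA, hmax⟩ := A.exists_max_image (fun x => (p x b).length) ⟨a, haA⟩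
  have hxI : x ∈ I := (Finset.mem_filter.mp hxA).1
  have hxreach : Grm.Reachable x a := (Finset.mem_filter.mp hxA).2
  have hxb : x ≠ b := by
    rintro rfl
    exact not_reach_ab hT hab hxreach.symm
  obtain ⟨z, hxz, q, hq⟩ := SimpleGraph.Walk.exists_eq_cons_of_ne hxb (p x b)
  have hqp : q.IsPath := ((SimpleGraph.Walk.cons_isPath_iff hxz q).1 (hq ▸ hp x b)).1
  have hqz : q = p z b := (hT.existsUnique_path z b).unique hqp (hp z b)
  refine ⟨x, ⟨(Finset.mem_filter.mp hxI).2, ?_⟩, hxreach⟩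
  have hsub : (G.neighborFinset x) ∩ I ⊆ {z} := by
    intro y hy
    rw [Finset.mem_inter, SimpleGraph.mem_neighborFinset] at hy
    obtain ⟨hadjxy, hyI⟩ := hy
    rw [Finset.mem_singleton]
    by_cases he : s(x, y) = s(a, b)
    · rw [Sym2.eq_iff] at he
      rcases he with ⟨rfl, rfl⟩ | ⟨rfl, rfl⟩
      · have hnil : p x y = SimpleGraph.Walk.cons hadjxy SimpleGraph.Walk.nil :=
          (hT.existsUnique_path x y).unique (hp x y)
            ((SimpleGraph.Walk.cons_isPath_iff hadjxy SimpleGraph.Walk.nil).2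
              ⟨SimpleGraph.Walk.IsPath.nil, by simp [hadjxy.ne]⟩)
        exact cons_inj' hadjxy hxz SimpleGraph.Walk.nil q (hnil.symm.trans hq)
      · exact absurd rfl hxb
    · have hGr : Grm.Adj x y := by
        simp [hGrm, SimpleGraph.deleteEdges_adj, hadjxy, he]
      have hyA : y ∈ A := by
        rw [hA, Finset.mem_filter]
        exact ⟨hyI, hGr.symm.reachable.trans hxreach⟩
      have := succ_eq p hT hp hadjxy (hmax y hyA)
      rw [hq] at this
      exact (cons_inj' hxz hadjxy q (p y b) this).symm
  calc ((G.neighborFinset x) ∩ I).card ≤ ({z} : Finset V).card := Finset.card_le_card hsub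
    _ = 1 := Finset.card_singleton z

lemma snd_internal (hT : G.IsTree) (hp : ∀ x y, (p x y).IsPath) {x y : V}
    (hxy : x ≠ y) (hyI : G.degree y ≠ 1) :
    ∃ (z : V) (h : G.Adj x z) (q : G.Walk z y),
      p x y = SimpleGraph.Walk.cons h q ∧ q = p z y ∧ G.degree z ≠ 1 := by
  obtain ⟨z, hxz, q, hq⟩ := SimpleGraph.Walk.exists_eq_cons_of_ne hxy (p x y)
  have hqp : q.IsPath := ((SimpleGraph.Walk.cons_isPath_iff hxz q).1 (hq ▸ hp x y)).1
  have hqz : q = p z y := (hT.existsUnique_path z y).unique hqp (hp z y)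
  refine ⟨z, hxz, q, hq, hqz, ?_⟩
  by_cases hzy : z = y
  · subst hzy; exact hyI
  · obtain ⟨u, hzu, q2, hq2⟩ := SimpleGraph.Walk.exists_eq_cons_of_ne hzy q
    have hnd : (p x y).support.Nodup := (hp x y).support_nodup
    rw [hq, SimpleGraph.Walk.support_cons, hq2, SimpleGraph.Walk.support_cons,
      SimpleGraph.Walk.support_eq_cons q2] at hnd
    have hxu : x ≠ u := by
      simp only [List.nodup_cons, List.mem_cons] at hnd
      intro hc
      exact hnd.1 (Or.inr (Or.inl hc))
    have h2 : 2 ≤ (G.neighborFinset z).card := by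
      apply Finset.one_lt_card.mpr
      refine ⟨x, ?_, u, ?_, hxu⟩
      · rw [SimpleGraph.mem_neighborFinset]; exact hxz.symm
      · rw [SimpleGraph.mem_neighborFinset]; exact hzu
    intro hdeg
    rw [← SimpleGraph.card_neighborFinset_eq_degree] at hdeg
    omega

lemma adj_case (hT : G.IsTree) (hp : ∀ x y, (p x y).IsPath)
    {x y z : V}
    (hxy : G.Adj x y) (hyz : y ≠ z) (hxI : G.degree x ≠ 1) (hzI : G.degree z ≠ 1)
    (hquasiy : ((G.neighborFinset y) ∩ (univ.filter (fun v => G.degree v ≠ 1))).card ≤ 1)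
    (hsnd : p x z = SimpleGraph.Walk.cons hxy (p y z)) : False := by
  obtain ⟨u, hyu, q4, hdec4, hq4, huI⟩ := snd_internal p hT hp hyz hzI
  have hxmem : x ∈ (G.neighborFinset y) ∩ (univ.filter (fun v => G.degree v ≠ 1)) := by
    rw [Finset.mem_inter, SimpleGraph.mem_neighborFinset]
    exact ⟨hxy.symm, Finset.mem_filter.mpr ⟨Finset.mem_univ x, hxI⟩⟩
  have humem : u ∈ (G.neighborFinset y) ∩ (univ.filter (fun v => G.degree v ≠ 1)) := by
    rw [Finset.mem_inter, SimpleGraph.mem_neighborFinset]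
    exact ⟨hyu, Finset.mem_filter.mpr ⟨Finset.mem_univ u, huI⟩⟩
  have hux : u = x := Finset.card_le_one.mp hquasiy u humem x hxmem
  subst hux
  rw [hq4] at hdec4
  have l1 := congrArg SimpleGraph.Walk.length hsnd
  have l2 := congrArg SimpleGraph.Walk.length hdec4
  rw [SimpleGraph.Walk.length_cons] at l1 l2
  omega

lemma quasi_card_le_two (hT : G.IsTree) (hp : ∀ x y, (p x y).IsPath)
    (hq : ∀ v : V, G.degree v ≠ 1 →
      ((G.neighborFinset v) ∩ (univ.filter (fun u => G.degree u ≠ 1))).card ≤ 1) :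
    (univ.filter (fun v => G.degree v ≠ 1) : Finset V).card ≤ 2 := by
  set I : Finset V := univ.filter (fun v => G.degree v ≠ 1) with hI
  by_contra h3
  push_neg at h3
  have hT3 : ∃ t : V × V × V, t.1 ∈ I ∧ t.2.1 ∈ I ∧ t.2.2 ∈ I ∧
      t.1 ≠ t.2.1 ∧ t.1 ≠ t.2.2 ∧ t.2.1 ≠ t.2.2 := by
    obtain ⟨x, hx⟩ := Finset.card_pos.mp (by omega : 0 < I.card)
    have h1 : 0 < (I.erase x).card := by
      have := Finset.card_erase_of_mem hx; omega
    obtain ⟨y, hy⟩ := Finset.card_pos.mp h1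
    have h2 : 0 < ((I.erase x).erase y).card := by
      have := Finset.card_erase_of_mem hy
      have := Finset.card_erase_of_mem hx; omega
    obtain ⟨z, hz⟩ := Finset.card_pos.mp h2
    refine ⟨(x, y, z), hx, (Finset.mem_erase.mp hy).2, ?_, ?_, ?_, ?_⟩
    · exact (Finset.mem_erase.mp (Finset.mem_erase.mp hz).2).2
    · exact fun hc => (Finset.mem_erase.mp hy).1 hc.symm
    · exact fun hc => (Finset.mem_erase.mp (Finset.mem_erase.mp hz).2).1 hc.symm
    · exact fun hc => (Finset.mem_erase.mp hz).1 hc.symm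
  set T : Finset (V × V × V) := (I ×ˢ I ×ˢ I).filter
    (fun t => t.1 ≠ t.2.1 ∧ t.1 ≠ t.2.2 ∧ t.2.1 ≠ t.2.2) with hTdef
  have hTne : T.Nonempty := by
    obtain ⟨t, h1, h2, h3', h4, h5, h6⟩ := hT3
    exact ⟨t, by simp [hTdef, Finset.mem_product, h1, h2, h3', h4, h5, h6]⟩
  obtain ⟨t, htT, hmin⟩ := T.exists_min_image
    (fun t => (p t.1 t.2.1).length + (p t.1 t.2.2).length + (p t.2.1 t.2.2).length) hTne
  obtain ⟨x, y, z⟩ := t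
  simp only [hTdef, Finset.mem_filter, Finset.mem_product] at htT
  obtain ⟨⟨hxI, hyI, hzI⟩, hxy, hxz, hyz⟩ := htT
  have hxI' : G.degree x ≠ 1 := (Finset.mem_filter.mp hxI).2
  have hyI' : G.degree y ≠ 1 := (Finset.mem_filter.mp hyI).2
  have hzI' : G.degree z ≠ 1 := (Finset.mem_filter.mp hzI).2
  obtain ⟨u1, h1, q1, hdec1, hq1, hu1I⟩ := snd_internal p hT hp hxy hyI'
  obtain ⟨u2, h2, q2, hdec2, hq2, hu2I⟩ := snd_internal p hT hp hxz hzI'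
  have hu12 : u1 = u2 := by
    apply Finset.card_le_one.mp (hq x hxI')
    · rw [Finset.mem_inter, SimpleGraph.mem_neighborFinset]
      exact ⟨h1, Finset.mem_filter.mpr ⟨Finset.mem_univ _, hu1I⟩⟩
    · rw [Finset.mem_inter, SimpleGraph.mem_neighborFinset]
      exact ⟨h2, Finset.mem_filter.mpr ⟨Finset.mem_univ _, hu2I⟩⟩
  subst hu12
  by_cases hvy : u1 = y
  · subst hvy
    rw [hq2] at hdec2
    exact adj_case p hT hp h1 hyz hxI' hzI' (hq u1 hyI') hdec2
  · by_cases hvz : u1 = z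
    · subst hvz
      rw [hq1] at hdec1
      exact adj_case p hT hp h2 (fun hc => hyz hc.symm) hxI' hyI' (hq u1 hzI') hdec1
    · have hnewT : (u1, y, z) ∈ T := by
        simp only [hTdef, Finset.mem_filter, Finset.mem_product]
        exact ⟨⟨Finset.mem_filter.mpr ⟨Finset.mem_univ _, hu1I⟩, hyI, hzI⟩, hvy, hvz, hyz⟩
      have hle := hmin _ hnewT
      simp only at hle
      have l1 := congrArg SimpleGraph.Walk.length hdec1
      have l2 := congrArg SimpleGraph.Walk.length hdec2
      rw [SimpleGraph.Walk.length_cons] at l1 l2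
      rw [hq1] at l1
      rw [hq2] at l2
      omega

end
end NonleafPathHeavy
theorem exists_nonleaf_path_heavy {V : Type*} [Fintype V] (G : SimpleGraph V)
    [DecidableRel G.Adj] (hT : G.IsTree) (hn : 5 ≤ Fintype.card V)
    (w : Sym2 V → ℝ) (hw : ∀ e ∈ G.edgeSet, 0 ≤ w e) :
    ∃ u v : V, G.degree u ≠ 1 ∧ G.degree v ≠ 1 ∧
      ∃ q : G.Walk u v, q.IsPath ∧
        4 / ((Fintype.card V : ℝ) - 1) * (∑ e ∈ G.edgeFinset, w e) ≤
          (q.edges.map w).sum +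
            ∑ e ∈ G.edgeFinset.filter (fun e => ∃ x ∈ e, G.degree x = 1), w e := by
  classical
  obtain ⟨p, hp⟩ : ∃ p : ∀ x y : V, G.Walk x y, ∀ x y, (p x y).IsPath := by
    have h := fun x y => (hT.existsUnique_path x y)
    choose p hp _ using h
    exact ⟨p, hp⟩
  set n := Fintype.card V with hndef
  set I : Finset V := Finset.univ.filter (fun v => G.degree v ≠ 1) with hI
  set Lset : Finset V := I.filter (fun x => ((G.neighborFinset x) ∩ I).card ≤ 1) with hLs
  set Elf := G.edgeFinset.filter (fun e => ∃ x ∈ e, G.degree x = 1) with hElf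
  set Eint := G.edgeFinset.filter (fun e => ¬ ∃ x ∈ e, G.degree x = 1) with hEintd
  have hw' : ∀ e ∈ G.edgeFinset, 0 ≤ w e := fun e he => hw e (mem_edgeFinset.mp he)
  have hWL0 : 0 ≤ ∑ e ∈ Elf, w e :=
    Finset.sum_nonneg fun e he => hw' e (Finset.mem_filter.mp he).1
  have hW'0 : 0 ≤ ∑ e ∈ Eint, w e :=
    Finset.sum_nonneg fun e he => hw' e (Finset.mem_filter.mp he).1
  have hsplit : ∑ e ∈ G.edgeFinset, w e = (∑ e ∈ Eint, w e) + ∑ e ∈ Elf, w e := by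
    rw [hEintd, hElf, add_comm, Finset.sum_filter_add_sum_filter_not]
  have hn5 : (5 : ℕ) ≤ n := hn
  have hnR : (5:ℝ) ≤ (n:ℝ) := by exact_mod_cast hn5
  have hNpos : (0:ℝ) < (n:ℝ) - 1 := by linarith
  have hN4 : (4:ℝ) ≤ (n:ℝ) - 1 := by linarith
  have hLsetI : ∀ x ∈ Lset, G.degree x ≠ 1 := by
    intro x hx
    exact (Finset.mem_filter.mp ((Finset.mem_filter.mp hx).1)).2
  have hLsetMem : ∀ x, G.degree x ≠ 1 → ((G.neighborFinset x) ∩ I).card ≤ 1 → x ∈ Lset := by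
    intro x h1 h2
    exact Finset.mem_filter.mpr ⟨Finset.mem_filter.mpr ⟨Finset.mem_univ x, h1⟩, h2⟩
  have hInonempty : I.Nonempty := by
    by_contra h
    rw [Finset.not_nonempty_iff_eq_empty] at h
    have hall : ∀ v : V, G.degree v = 1 := by
      intro v; by_contra hv
      have : v ∈ I := Finset.mem_filter.mpr ⟨Finset.mem_univ v, hv⟩
      rw [h] at this; exact absurd this (Finset.notMem_empty v)
    have hsum : ∑ v : V, G.degree v = n := by
      rw [hndef]; simp [hall, Finset.card_univ]
    have h2 := G.sum_degrees_eq_twice_card_edges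
    have h3 := hT.card_edgeFinset
    omega
  have hsides : ∀ a b : V, G.Adj a b → G.degree a ≠ 1 → G.degree b ≠ 1 →
      (∃ x ∈ Lset, (G.deleteEdges {s(a,b)}).Reachable x a) ∧
      (∃ x ∈ Lset, ¬ (G.deleteEdges {s(a,b)}).Reachable x a) := by
    intro a b hab ha hb
    obtain ⟨x1, ⟨hx1d, hx1q⟩, hx1r⟩ := NonleafPathHeavy.claimD p hT hp hab ha
    obtain ⟨x2, ⟨hx2d, hx2q⟩, hx2r⟩ := NonleafPathHeavy.claimD p hT hp hab.symm hb
    rw [Sym2.eq_swap] at hx2r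
    refine ⟨⟨x1, hLsetMem x1 hx1d hx1q, hx1r⟩, ⟨x2, hLsetMem x2 hx2d hx2q, ?_⟩⟩
    intro hS
    exact NonleafPathHeavy.not_reach_ab hT hab (hS.symm.trans hx2r)
  by_cases hL2 : 2 ≤ Lset.card
  · -- main case
    set F : V × V → ℝ := fun q => (((p q.1 q.2).edges.map w).sum) with hFdef
    have hFnonneg : ∀ q : V × V, 0 ≤ F q := by
      intro q
      apply List.sum_nonneg
      intro x hx
      rw [List.mem_map] at hx
      obtain ⟨e, he, rfl⟩ := hx
      exact hw e ((p q.1 q.2).edges_subset_edgeSet he)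
    have hF : ∀ x y : V, F (x, y) = ∑ e ∈ G.edgeFinset.filter (fun e => e ∈ (p x y).edges), w e := by
      intro x y
      have h1 : G.edgeFinset.filter (fun e => e ∈ (p x y).edges) = (p x y).edges.toFinset := by
        ext e
        simp only [Finset.mem_filter, List.mem_toFinset, mem_edgeFinset]
        exact ⟨fun h => h.2, fun h => ⟨(p x y).edges_subset_edgeSet h, h⟩⟩
      rw [h1, List.sum_toFinset w ((hp x y).edges_nodup)]
    set K := Lset.offDiag with hKdef
    have hKne : K.Nonempty := by
      obtain ⟨x, hx, y, hy, hxy⟩ := Finset.one_lt_card.mp hL2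
      exact ⟨(x, y), Finset.mem_offDiag.mpr ⟨hx, hy, hxy⟩⟩
    have hdouble : ∑ q ∈ K, F q =
        ∑ e ∈ G.edgeFinset, ((K.filter (fun q => e ∈ (p q.1 q.2).edges)).card : ℝ) * w e := by
      have h1 : ∑ q ∈ K, F q
          = ∑ q ∈ K, ∑ e ∈ G.edgeFinset, (if e ∈ (p q.1 q.2).edges then w e else 0) := by
        apply Finset.sum_congr rfl
        intro q hq
        rw [show q = (q.1, q.2) from rfl, hF q.1 q.2, Finset.sum_filter]
      rw [h1, Finset.sum_comm]
      apply Finset.sum_congr rfl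
      intro e he
      rw [← Finset.sum_filter, Finset.sum_const, nsmul_eq_mul]
    have hcov : ∀ e ∈ Eint,
        2 * Lset.card ≤ (K.filter (fun q => e ∈ (p q.1 q.2).edges)).card + 2 := by
      intro e he
      have hmem := Finset.mem_filter.mp he
      revert hmem
      refine Sym2.ind (fun a b => ?_) e
      intro ⟨heE, hni⟩
      have hab : G.Adj a b := mem_edgeFinset.mp heE
      push_neg at hni
      have ha : G.degree a ≠ 1 := hni a (Sym2.mem_mk_left a b)
      have hb : G.degree b ≠ 1 := hni b (Sym2.mem_mk_right a b)
      obtain ⟨⟨x1, hx1L, hx1r⟩, ⟨x2, hx2L, hx2r⟩⟩ := hsides a b hab ha hb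
      set S := fun v => (G.deleteEdges {s(a,b)}).Reachable v a with hSdef
      set A := Lset.filter S with hAdef
      set B := Lset.filter (fun v => ¬ S v) with hBdef
      have hAB : A.card + B.card = Lset.card :=
        Finset.card_filter_add_card_filter_not (p := S)
      have hA1 : 1 ≤ A.card :=
        Finset.card_pos.mpr ⟨x1, Finset.mem_filter.mpr ⟨hx1L, hx1r⟩⟩
      have hB1 : 1 ≤ B.card :=
        Finset.card_pos.mpr ⟨x2, Finset.mem_filter.mpr ⟨hx2L, hx2r⟩⟩
      have hfeq : K.filter (fun q => s(a,b) ∈ (p q.1 q.2).edges) = (A ×ˢ B) ∪ (B ×ˢ A) := by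
        ext ⟨x, y⟩
        simp only [Finset.mem_filter, Finset.mem_offDiag, Finset.mem_union,
          Finset.mem_product, hKdef, hAdef, hBdef]
        rw [NonleafPathHeavy.edge_mem_path_iff hT hab (p x y) (hp x y)]
        constructor
        · rintro ⟨⟨hx, hy, _⟩, hiff⟩
          by_cases hSx : S x <;> by_cases hSy : S y
          · exact absurd ⟨fun _ => hSy, fun _ => hSx⟩ hiff
          · exact Or.inl ⟨⟨hx, hSx⟩, hy, hSy⟩
          · exact Or.inr ⟨⟨hx, hSx⟩, hy, hSy⟩
          · exact absurd ⟨fun h => absurd h hSx, fun h => absurd h hSy⟩ hiff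
        · rintro (⟨⟨hx, hSx⟩, hy, hSy⟩ | ⟨⟨hx, hSx⟩, hy, hSy⟩)
          · exact ⟨⟨hx, hy, fun h => hSy (h ▸ hSx)⟩, fun hiff => hSy (hiff.mp hSx)⟩
          · refine ⟨⟨hx, hy, fun h => hSx (by rw [h]; exact hSy)⟩, fun hiff => hSx (hiff.mpr hSy)⟩
      rw [hfeq, Finset.card_union_of_disjoint, Finset.card_product, Finset.card_product]
      · nlinarith [hA1, hB1, hAB]
      · rw [Finset.disjoint_left]
        rintro ⟨x, y⟩ hxy1 hxy2
        rw [Finset.mem_product] at hxy1 hxy2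
        exact (Finset.mem_filter.mp hxy2.1).2 (Finset.mem_filter.mp hxy1.1).2
    -- lower bound for the double sum
    have hsum_ge : ((2 * (Lset.card:ℝ)) - 2) * (∑ e ∈ Eint, w e) ≤ ∑ q ∈ K, F q := by
      rw [hdouble, Finset.mul_sum]
      have step1 : ∑ e ∈ Eint, ((2 * (Lset.card:ℝ)) - 2) * w e ≤
          ∑ e ∈ Eint, ((K.filter (fun q => e ∈ (p q.1 q.2).edges)).card : ℝ) * w e := by
        apply Finset.sum_le_sum
        intro e he
        apply mul_le_mul_of_nonneg_right ?_ (hw' e (Finset.filter_subset _ _ he))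
        have h1 := hcov e he
        have h2 : ((2 * Lset.card : ℕ) : ℝ) ≤
            (((K.filter (fun q => e ∈ (p q.1 q.2).edges)).card + 2 : ℕ) : ℝ) := by
          exact_mod_cast h1
        push_cast at h2
        linarith
      refine step1.trans ?_
      apply Finset.sum_le_sum_of_subset_of_nonneg (Finset.filter_subset _ _)
      intro e he _
      exact mul_nonneg (Nat.cast_nonneg _) (hw' e he)
    obtain ⟨q0, hq0, hmax⟩ := K.exists_max_image F hKne
    obtain ⟨u, v⟩ := q0
    obtain ⟨huL, hvL, huv⟩ := Finset.mem_offDiag.mp hq0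
    have hsum_le : ∑ q ∈ K, F q ≤ (K.card : ℝ) * F (u, v) := by
      have := Finset.sum_le_card_nsmul K F (F (u, v)) (fun q hq => hmax q hq)
      rwa [nsmul_eq_mul] at this
    have hKcard : K.card = Lset.card * Lset.card - Lset.card := by
      rw [hKdef]; exact Finset.offDiag_card _
    set L : ℝ := (Lset.card : ℝ) with hLdef
    have hLR : (2:ℝ) ≤ L := by rw [hLdef]; exact_mod_cast hL2
    have hKcardR : (K.card : ℝ) = L * L - L := by
      rw [hKcard, Nat.cast_sub (Nat.le_mul_of_pos_left Lset.card (by omega))]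
      push_cast
      ring
    have hmain : ((2 * L) - 2) * (∑ e ∈ Eint, w e) ≤ (L * L - L) * F (u, v) := by
      calc ((2 * L) - 2) * (∑ e ∈ Eint, w e) ≤ ∑ q ∈ K, F q := hsum_ge
        _ ≤ (K.card : ℝ) * F (u, v) := hsum_le
        _ = (L * L - L) * F (u, v) := by rw [hKcardR]
    -- counting: 2 * Lset.card + 1 ≤ n
    have hcount : 2 * Lset.card + 1 ≤ n := by
      by_cases hqall : ∀ x : V, G.degree x ≠ 1 →
          ((G.neighborFinset x) ∩ (Finset.univ.filter (fun u => G.degree u ≠ 1))).card ≤ 1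
      · have h22 : I.card ≤ 2 := by
          rw [hI]
          exact NonleafPathHeavy.quasi_card_le_two p hT hp hqall
        have hsub : Lset.card ≤ I.card := Finset.card_le_card (Finset.filter_subset _ _)
        omega
      · push_neg at hqall
        obtain ⟨v', hv1, hv2⟩ := hqall
        have hvI : v' ∈ I := Finset.mem_filter.mpr ⟨Finset.mem_univ v', hv1⟩
        have hvnot : v' ∉ Lset := by
          intro hc
          have := (Finset.mem_filter.mp hc).2
          rw [← hI] at hv2
          omega
        have hssub : Lset ⊂ I :=
          ⟨Finset.filter_subset _ _, fun hsub => hvnot (hsub hvI)⟩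
        have h1 : Lset.card + 1 ≤ I.card := Finset.card_lt_card hssub
        -- injection from Lset into leaves
        have h2 : Lset.card ≤ (Finset.univ.filter (fun v => G.degree v = 1)).card := by
          have hlf : ∀ x ∈ Lset, ∃ y, G.Adj x y ∧ G.degree y = 1 := by
            intro x hx
            have hdx : G.degree x ≠ 1 := hLsetI x hx
            have hq1 : ((G.neighborFinset x) ∩ I).card ≤ 1 := (Finset.mem_filter.mp hx).2
            have hdegpos : 0 < G.degree x := by
              rw [SimpleGraph.degree_pos_iff_exists_adj]
              obtain ⟨y, hy⟩ := Fintype.exists_ne_of_one_lt_card (by omega) x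
              obtain ⟨wlk⟩ := hT.isConnected x y
              obtain ⟨z, hxz, q, _⟩ := SimpleGraph.Walk.exists_eq_cons_of_ne (Ne.symm hy) wlk
              exact ⟨z, hxz⟩
            have hdeg2 : 2 ≤ (G.neighborFinset x).card := by
              rw [SimpleGraph.card_neighborFinset_eq_degree]
              omega
            by_contra hno
            push_neg at hno
            have hsubn : G.neighborFinset x ⊆ I := by
              intro y hy
              exact Finset.mem_filter.mpr
                ⟨Finset.mem_univ y, hno y ((SimpleGraph.mem_neighborFinset G x y).mp hy)⟩
            rw [Finset.inter_eq_left.mpr hsubn] at hq1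
            omega
          set f : V → V := fun x =>
            if h : ∃ y, G.Adj x y ∧ G.degree y = 1 then h.choose else x with hfdef
          have hfspec : ∀ x ∈ Lset, G.Adj x (f x) ∧ G.degree (f x) = 1 := by
            intro x hx
            have hex := hlf x hx
            have hfx : f x = hex.choose := by rw [hfdef]; exact dif_pos hex
            rw [hfx]
            exact hex.choose_spec
          apply Finset.card_le_card_of_injOn f
          · intro x hx
            exact Finset.mem_filter.mpr ⟨Finset.mem_univ _, (hfspec x hx).2⟩
          · intro x1 hx1 x2 hx2 heq
            have h1' := hfspec x1 hx1
            have h2' := hfspec x2 hx2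
            have hm1 : x1 ∈ G.neighborFinset (f x1) :=
              (SimpleGraph.mem_neighborFinset G (f x1) x1).mpr (h1'.1.symm)
            have hm2 : x2 ∈ G.neighborFinset (f x1) := by
              rw [heq]
              exact (SimpleGraph.mem_neighborFinset G (f x2) x2).mpr (h2'.1.symm)
            have hcard : (G.neighborFinset (f x1)).card ≤ 1 := by
              rw [SimpleGraph.card_neighborFinset_eq_degree, h1'.2]
            exact Finset.card_le_one.mp hcard x1 hm1 x2 hm2
        have h3 : (Finset.univ.filter (fun v => G.degree v = 1)).card + I.card = n := by
          have h4 := Finset.card_filter_add_card_filter_not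
            (s := (Finset.univ : Finset V)) (p := fun v : V => G.degree v = 1)
          rw [Finset.card_univ, ← hndef] at h4
          rw [hI]
          convert h4 using 3
        omega
    -- final arithmetic
    refine ⟨u, v, hLsetI u huL, hLsetI v hvL, p u v, hp u v, ?_⟩
    have hFeq : F (u, v) = ((p u v).edges.map w).sum := rfl
    rw [← hFeq, hsplit, div_mul_eq_mul_div, div_le_iff₀ hNpos]
    have hN2L : 2 * L ≤ (n:ℝ) - 1 := by
      have : ((2 * Lset.card + 1 : ℕ) : ℝ) ≤ ((n : ℕ) : ℝ) := by exact_mod_cast hcount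
      push_cast at this
      rw [hLdef]
      linarith
    have hLpos : (0:ℝ) < L - 1 := by linarith
    have e2 : 0 ≤ (L - 1) * (L * F (u, v) - 2 * (∑ e ∈ Eint, w e)) := by nlinarith [hmain]
    have e3 : 0 ≤ L * F (u, v) - 2 * (∑ e ∈ Eint, w e) := by
      by_contra h3
      push_neg at h3
      nlinarith [e2, hLpos]
    have t1 : 0 ≤ ((n:ℝ) - 1 - 2 * L) * F (u, v) :=
      mul_nonneg (by linarith) (hFnonneg (u, v))
    have t2 : 0 ≤ ((n:ℝ) - 1 - 4) * (∑ e ∈ Elf, w e) := mul_nonneg (by linarith) hWL0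
    nlinarith [t1, t2, e3]
  · -- degenerate case : no internal edges
    have hEintEmpty : Eint = ∅ := by
      by_contra hne
      obtain ⟨e, he⟩ := Finset.nonempty_iff_ne_empty.mpr hne
      have hmem := Finset.mem_filter.mp he
      revert hmem
      refine Sym2.ind (fun a b => ?_) e
      intro ⟨heE, hni⟩
      have hab : G.Adj a b := mem_edgeFinset.mp heE
      push_neg at hni
      have ha : G.degree a ≠ 1 := hni a (Sym2.mem_mk_left a b)
      have hb : G.degree b ≠ 1 := hni b (Sym2.mem_mk_right a b)
      obtain ⟨⟨x1, hx1L, hx1r⟩, ⟨x2, hx2L, hx2r⟩⟩ := hsides a b hab ha hb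
      have hne12 : x1 ≠ x2 := by
        rintro rfl; exact hx2r hx1r
      exact hL2 (Finset.one_lt_card.mpr ⟨x1, hx1L, x2, hx2L, hne12⟩)
    obtain ⟨x0, hx0⟩ := hInonempty
    refine ⟨x0, x0, (Finset.mem_filter.mp hx0).2, (Finset.mem_filter.mp hx0).2,
      SimpleGraph.Walk.nil, SimpleGraph.Walk.IsPath.nil, ?_⟩
    simp only [SimpleGraph.Walk.edges_nil, List.map_nil, List.sum_nil, zero_add]
    rw [hsplit, hEintEmpty, Finset.sum_empty, zero_add, div_mul_eq_mul_div, div_le_iff₀ hNpos]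
    nlinarith [hWL0, hN4]
end

section
/- Let (X,d) be a metric space and let S ⊆ X be a finite set of n points with n ≥ 3. Then there exists a proper bipartition S = R ∪ B such that mst(R) + mst(B) ≥ ((n−2)/(n−1)) · mst(S). -/
open scoped Classical

namespace MSTAux

open SimpleGraph

variable {V : Type*} {W : Type*}

/-- Add a new vertex `none` adjacent only to `some v₀`. -/
def addLeaf (G : SimpleGraph V) (v₀ : V) : SimpleGraph (Option V) where
  Adj x y := (∃ a b, x = some a ∧ y = some b ∧ G.Adj a b) ∨
    (x = none ∧ y = some v₀) ∨ (x = some v₀ ∧ y = none)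
  symm := by
    constructor
    rintro x y (⟨a, b, rfl, rfl, h⟩ | ⟨rfl, rfl⟩ | ⟨rfl, rfl⟩)
    · exact Or.inl ⟨b, a, rfl, rfl, h.symm⟩
    · exact Or.inr (Or.inr ⟨rfl, rfl⟩)
    · exact Or.inr (Or.inl ⟨rfl, rfl⟩)
  loopless := by
    constructor
    rintro x (⟨a, b, rfl, hab, h⟩ | ⟨rfl, h⟩ | ⟨h1, h2⟩)
    · exact G.loopless.irrefl a (by cases hab; exact h)
    · exact nomatch h
    · exact nomatch h1.symm.trans h2

variable {G : SimpleGraph V} {v₀ : V}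

lemma addLeaf_adj_some_some {a b : V} :
    (addLeaf G v₀).Adj (some a) (some b) ↔ G.Adj a b := by
  constructor
  · rintro (⟨c, d, hc, hd, h⟩ | ⟨h, -⟩ | ⟨-, h⟩)
    · cases hc; cases hd; exact h
    · exact nomatch h
    · exact nomatch h
  · exact fun h => Or.inl ⟨a, b, rfl, rfl, h⟩

lemma addLeaf_adj_none {y : Option V} :
    (addLeaf G v₀).Adj none y ↔ y = some v₀ := by
  constructor
  · rintro (⟨c, d, hc, -, -⟩ | ⟨-, h⟩ | ⟨h, -⟩)
    · exact nomatch hc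
    · exact h
    · exact nomatch h
  · rintro rfl; exact Or.inr (Or.inl ⟨rfl, rfl⟩)

/-- The inclusion homomorphism. -/
def addLeafHom (G : SimpleGraph V) (v₀ : V) : G →g addLeaf G v₀ where
  toFun := some
  map_rel' := fun h => Or.inl ⟨_, _, rfl, rfl, h⟩

lemma addLeaf_connected (hG : G.Connected) : (addLeaf G v₀).Connected := by
  have hreach : ∀ x : Option V, (addLeaf G v₀).Reachable x (some v₀) := by
    rintro (_ | a)
    · exact (addLeaf_adj_none.mpr rfl).reachable
    · exact (hG.preconnected a v₀).map (addLeafHom G v₀)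
  haveI : Nonempty (Option V) := ⟨none⟩
  exact SimpleGraph.Connected.mk (fun x y => (hreach x).trans (hreach y).symm)

lemma addLeaf_lower : ∀ {x y : Option V} (p : (addLeaf G v₀).Walk x y),
    (none ∉ p.support) → ∀ {a b : V} (hx : x = some a) (hy : y = some b),
    ∃ q : G.Walk a b, p = (q.map (addLeafHom G v₀)).copy hx.symm hy.symm := by
  intro x y p
  induction p with
  | nil =>
    intro hp a b hx hy
    cases hx; cases Option.some.inj hy
    exact ⟨SimpleGraph.Walk.nil, rfl⟩
  | @cons u z w h p ih =>
    intro hp a b hx hy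
    have hz : z ≠ none := by
      intro hz
      subst hz
      exact hp (by
        rw [SimpleGraph.Walk.support_cons]
        exact List.mem_cons_of_mem _ p.start_mem_support)
    obtain ⟨c, rfl⟩ := Option.ne_none_iff_exists'.mp hz
    cases hx
    have hac : G.Adj a c := addLeaf_adj_some_some.mp h
    have hp' : none ∉ p.support := fun hn => hp (by
      rw [SimpleGraph.Walk.support_cons]
      exact List.mem_cons_of_mem _ hn)
    obtain ⟨q, hq⟩ := ih hp' rfl hy
    cases hy
    refine ⟨SimpleGraph.Walk.cons hac q, ?_⟩
    rw [hq]
    rfl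

lemma addLeaf_isAcyclic (hG : G.IsAcyclic) : (addLeaf G v₀).IsAcyclic := by
  intro x c hc
  by_cases hnone : none ∈ c.support
  · have hcyc : (c.rotate none hnone).IsCycle := hc.rotate hnone
    have hlen : 3 ≤ (c.rotate none hnone).length := hcyc.three_le_length
    obtain ⟨z, hadj, p, hp⟩ := (SimpleGraph.Walk.not_nil_iff).mp hcyc.not_nil
    have hz : z = some v₀ := addLeaf_adj_none.mp hadj
    subst hz
    rw [hp, SimpleGraph.Walk.cons_isCycle_iff] at hcyc
    have hplen : p.length ≠ 0 := by
      rw [hp] at hlen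
      simp only [SimpleGraph.Walk.length_cons] at hlen
      omega
    have hpnil : ¬ p.reverse.Nil := by
      rw [SimpleGraph.Walk.nil_iff_length_eq, SimpleGraph.Walk.length_reverse]
      exact hplen
    obtain ⟨w, hadj2, r, hr⟩ := SimpleGraph.Walk.not_nil_iff.mp hpnil
    have hw : w = some v₀ := addLeaf_adj_none.mp hadj2
    subst hw
    have hmem : s(none, some v₀) ∈ p.reverse.edges := by
      rw [hr]; simp
    rw [SimpleGraph.Walk.edges_reverse, List.mem_reverse] at hmem
    exact hcyc.2 hmem
  · have hx : x ≠ none := fun h => hnone (h ▸ c.start_mem_support)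
    obtain ⟨a, rfl⟩ := Option.ne_none_iff_exists'.mp hx
    obtain ⟨q, hq⟩ := addLeaf_lower c hnone rfl rfl
    rw [hq] at hc
    exact hG q ((SimpleGraph.Walk.map_isCycle_iff_of_injective
      (Option.some_injective V)).mp hc)

lemma addLeaf_isTree (hG : G.IsTree) : (addLeaf G v₀).IsTree :=
  ⟨addLeaf_connected hG.isConnected, addLeaf_isAcyclic hG.IsAcyclic⟩

lemma addLeaf_edgeSet :
    (addLeaf G v₀).edgeSet = (Sym2.map some) '' G.edgeSet ∪ {s((none : Option V), some v₀)} := by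
  ext e
  induction e using Sym2.ind with
  | _ x y =>
    simp only [SimpleGraph.mem_edgeSet, Set.mem_union, Set.mem_image, Set.mem_singleton_iff]
    constructor
    · rintro (⟨a, b, rfl, rfl, h⟩ | ⟨rfl, rfl⟩ | ⟨rfl, rfl⟩)
      · exact Or.inl ⟨s(a, b), h, rfl⟩
      · exact Or.inr rfl
      · exact Or.inr (Sym2.eq_swap)
    · rintro (⟨e', he', heq⟩ | heq)
      · induction e' using Sym2.ind with
        | _ a b =>
          rw [Sym2.map_pair_eq, Sym2.eq_iff] at heq
          rcases heq with ⟨rfl, rfl⟩ | ⟨rfl, rfl⟩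
          · exact Or.inl ⟨a, b, rfl, rfl, he'⟩
          · exact Or.inl ⟨b, a, rfl, rfl, he'.symm⟩
      · rw [Sym2.eq_iff] at heq
        rcases heq with ⟨rfl, rfl⟩ | ⟨rfl, rfl⟩
        · exact Or.inr (Or.inl ⟨rfl, rfl⟩)
        · exact Or.inr (Or.inr ⟨rfl, rfl⟩)

lemma isTree_of_iso {G : SimpleGraph V} {H : SimpleGraph W} (φ : G ≃g H) (hG : G.IsTree) :
    H.IsTree := by
  constructor
  · exact (SimpleGraph.Iso.connected_iff φ).mp hG.isConnected
  · intro x c hc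
    exact hG.IsAcyclic _ ((SimpleGraph.Walk.map_isCycle_iff_of_injective
      (f := φ.symm.toHom) φ.symm.injective).mpr hc)

lemma edgeSet_map' (f : V ↪ W) (G : SimpleGraph V) :
    (G.map f).edgeSet = Sym2.map f '' G.edgeSet := by
  ext e
  induction e using Sym2.ind with
  | _ x y =>
    simp only [SimpleGraph.mem_edgeSet, SimpleGraph.map_adj, Set.mem_image]
    constructor
    · rintro ⟨a, b, h, rfl, rfl⟩
      exact ⟨s(a, b), h, rfl⟩
    · rintro ⟨e', he', heq⟩
      induction e' using Sym2.ind with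
      | _ a b =>
        rw [Sym2.map_pair_eq, Sym2.eq_iff] at heq
        rcases heq with ⟨rfl, rfl⟩ | ⟨rfl, rfl⟩
        · exact ⟨a, b, he', rfl, rfl⟩
        · exact ⟨b, a, he'.symm, rfl, rfl⟩


variable {X : Type*} [MetricSpace X]

/-- The edge-weight function. -/
def wfun (S : Finset X) : Sym2 ↥S → ℝ :=
  Sym2.lift ⟨fun (u v : S) => dist (u : X) (v : X), fun _ _ => dist_comm _ _⟩

/-- Total weight of a graph on `S`. -/
noncomputable def wt (S : Finset X) (G : SimpleGraph ↥S) : ℝ := ∑ᶠ e ∈ G.edgeSet, wfun S e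

@[simp] lemma wfun_pair (S : Finset X) (a b : ↥S) : wfun S s(a, b) = dist (a : X) (b : X) := rfl

lemma exists_leaf_tree (S B : Finset X) (u v : X) (huB : u ∉ B) (hv : v ∈ B)
    (hSB : ∀ x, x ∈ S ↔ x = u ∨ x ∈ B) (G : SimpleGraph ↥B) (hG : G.IsTree) :
    ∃ H : SimpleGraph ↥S, H.IsTree ∧ wt S H = wt B G + dist u v := by
  have hBS : ∀ x ∈ B, x ∈ S := fun x hx => (hSB x).2 (Or.inr hx)
  have huS : u ∈ S := (hSB u).2 (Or.inl rfl)
  let ε : Option ↥B ≃ ↥S :=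
  { toFun := fun o => o.elim ⟨u, huS⟩ (fun b => ⟨b.1, hBS b.1 b.2⟩)
    invFun := fun x => if h : (x : X) ∈ B then some ⟨x, h⟩ else none
    left_inv := by
      rintro (_ | b)
      · simp [huB]
      · simp
    right_inv := by
      rintro ⟨x, hx⟩
      rcases (hSB x).1 hx with rfl | hxB
      · simp [huB]
      · simp [hxB] }
  set v' : ↥B := ⟨v, hv⟩
  set H0 := addLeaf G v' with hH0
  refine ⟨H0.map ε.toEmbedding, isTree_of_iso (SimpleGraph.Iso.map ε H0) (addLeaf_isTree hG), ?_⟩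
  have hinj : Set.InjOn (Sym2.map ε) H0.edgeSet :=
    fun a _ b _ h => Sym2.map.injective ε.injective h
  have hinj2 : Set.InjOn (Sym2.map (some : ↥B → Option ↥B)) G.edgeSet :=
    fun a _ b _ h => Sym2.map.injective (Option.some_injective _) h
  have hdisj : Disjoint (Sym2.map (some : ↥B → Option ↥B) '' G.edgeSet)
      ({s((none : Option ↥B), some v')} : Set (Sym2 (Option ↥B))) := by
    rw [Set.disjoint_singleton_right]
    rintro ⟨e, -, heq⟩
    induction e using Sym2.ind with
    | _ a b =>
      rw [Sym2.map_pair_eq, Sym2.eq_iff] at heq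
      rcases heq with ⟨h1, -⟩ | ⟨-, h1⟩ <;> exact nomatch h1
  have key : wt S (H0.map ε.toEmbedding)
      = (∑ᶠ e ∈ G.edgeSet, wfun S (Sym2.map ε (Sym2.map some e)))
        + wfun S (Sym2.map ε s((none : Option ↥B), some v')) := by
    rw [wt, edgeSet_map', Equiv.coe_toEmbedding, finsum_mem_image hinj, hH0, addLeaf_edgeSet,
      finsum_mem_union hdisj (Set.toFinite _) (Set.toFinite _),
      finsum_mem_image hinj2, finsum_mem_singleton]
  rw [key]
  congr 1
  · rw [wt]
    apply finsum_mem_congr rfl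
    intro e he
    induction e using Sym2.ind with
    | _ a b => simp [Sym2.map_pair_eq, ε]


lemma wt_eq_sum (S : Finset X) (G : SimpleGraph ↥S) :
    wt S G = ∑ e ∈ G.edgeFinset, wfun S e := by
  rw [wt, ← finsum_mem_coe_finset, SimpleGraph.coe_edgeFinset]

lemma wt_nonneg (S : Finset X) (G : SimpleGraph ↥S) : 0 ≤ wt S G := by
  rw [wt_eq_sum]
  refine Finset.sum_nonneg fun e he => ?_
  induction e using Sym2.ind with
  | _ a b => exact dist_nonneg

lemma exists_tree : ∀ (S : Finset X), S.Nonempty → ∃ G : SimpleGraph ↥S, G.IsTree := by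
  intro S
  induction S using Finset.strongInduction with
  | _ S ih =>
    intro hS
    obtain ⟨u, hu⟩ := hS
    by_cases h1 : S.card ≤ 1
    · haveI : Subsingleton ↥S :=
        ⟨fun a b => Subtype.ext (Finset.card_le_one.mp h1 _ a.2 _ b.2)⟩
      haveI : Nonempty ↥S := ⟨⟨u, hu⟩⟩
      refine ⟨⊥, SimpleGraph.Connected.mk ?_, SimpleGraph.isAcyclic_bot⟩
      intro a b
      rw [Subsingleton.elim a b]
    · push_neg at h1
      set B := S.erase u with hB
      have hBne : B.Nonempty := by
        rw [← Finset.card_pos, hB, Finset.card_erase_of_mem hu]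
        omega
      obtain ⟨v, hv⟩ := hBne
      obtain ⟨G, hG⟩ := ih B (Finset.erase_ssubset hu) ⟨v, hv⟩
      have hSB : ∀ x, x ∈ S ↔ x = u ∨ x ∈ B := by
        intro x
        constructor
        · intro hx
          by_cases hxu : x = u
          · exact Or.inl hxu
          · exact Or.inr (Finset.mem_erase.mpr ⟨hxu, hx⟩)
        · rintro (rfl | hx)
          · exact hu
          · exact (Finset.mem_erase.mp hx).2
      obtain ⟨H, hH, -⟩ := exists_leaf_tree S B u v (Finset.notMem_erase u S) hv hSB G hG
      exact ⟨H, hH⟩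

/-- The set of weights of spanning trees. -/
def mstSet (S : Finset X) : Set ℝ := {c : ℝ | ∃ G : SimpleGraph ↥S, G.IsTree ∧ c = wt S G}

lemma mstSet_nonempty (S : Finset X) (hS : S.Nonempty) : (mstSet S).Nonempty := by
  obtain ⟨G, hG⟩ := exists_tree S hS
  exact ⟨wt S G, G, hG, rfl⟩

lemma mstSet_bddBelow (S : Finset X) : BddBelow (mstSet S) := by
  refine ⟨0, ?_⟩
  rintro c ⟨G, hG, rfl⟩
  exact wt_nonneg S G

end MSTAux

namespace MSTAux

variable {X : Type*} [MetricSpace X]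

lemma mst_def (S : Finset X) : mst S = sInf (mstSet S) := rfl

lemma mst_nonneg (S : Finset X) : 0 ≤ mst S := by
  rw [mst_def]
  apply Real.sInf_nonneg
  rintro c ⟨G, hG, rfl⟩
  exact wt_nonneg S G

lemma mst_singleton (u : X) : mst {u} = 0 := by
  refine le_antisymm ?_ (mst_nonneg _)
  rw [mst_def]
  haveI : Subsingleton (↥({u} : Finset X)) :=
    ⟨fun a b => Subtype.ext ((Finset.mem_singleton.mp a.2).trans
      (Finset.mem_singleton.mp b.2).symm)⟩
  haveI : Nonempty (↥({u} : Finset X)) := ⟨⟨u, Finset.mem_singleton_self u⟩⟩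
  have htree : (⊥ : SimpleGraph (↥({u} : Finset X))).IsTree := by
    refine ⟨SimpleGraph.Connected.mk ?_, SimpleGraph.isAcyclic_bot⟩
    intro a b
    rw [Subsingleton.elim a b]
  have hwt : wt {u} (⊥ : SimpleGraph (↥({u} : Finset X))) = 0 := by
    rw [wt, SimpleGraph.edgeSet_bot, finsum_mem_empty]
  exact csInf_le (mstSet_bddBelow _) ⟨⊥, htree, hwt.symm⟩

lemma mst_lower (S : Finset X) (hS : 1 ≤ S.card) (δ : ℝ)
    (hδ : ∀ x ∈ S, ∀ y ∈ S, x ≠ y → δ ≤ dist x y) :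
    ((S.card : ℝ) - 1) * δ ≤ mst S := by
  rw [mst_def]
  apply le_csInf (mstSet_nonempty S (Finset.card_pos.mp (by omega)))
  rintro c ⟨G, hG, rfl⟩
  rw [wt_eq_sum]
  have hcard : G.edgeFinset.card = S.card - 1 := by
    have h := hG.card_edgeFinset
    rw [Fintype.card_coe] at h
    omega
  have hbound : ∀ e ∈ G.edgeFinset, δ ≤ wfun S e := by
    intro e he
    induction e using Sym2.ind with
    | _ a b =>
      have hadj : G.Adj a b := by rwa [SimpleGraph.mem_edgeFinset, SimpleGraph.mem_edgeSet] at he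
      have hne : (a : X) ≠ (b : X) := fun h => G.ne_of_adj hadj (Subtype.ext h)
      exact hδ a a.2 b b.2 hne
  calc ((S.card : ℝ) - 1) * δ = (G.edgeFinset.card : ℝ) * δ := by
        rw [hcard, Nat.cast_sub hS, Nat.cast_one]
    _ ≤ ∑ e ∈ G.edgeFinset, wfun S e := by
        have := Finset.card_nsmul_le_sum G.edgeFinset (wfun S) δ hbound
        rwa [nsmul_eq_mul] at this

lemma mst_le_add (S B : Finset X) (u v : X) (huB : u ∉ B) (hv : v ∈ B)
    (hSB : ∀ x, x ∈ S ↔ x = u ∨ x ∈ B) :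
    mst S ≤ mst B + dist u v := by
  have h1 : ∀ c ∈ mstSet B, mst S ≤ c + dist u v := by
    rintro c ⟨G, hG, rfl⟩
    obtain ⟨H, hH, hw⟩ := exists_leaf_tree S B u v huB hv hSB G hG
    rw [mst_def]
    exact csInf_le (mstSet_bddBelow S) ⟨H, hH, hw.symm⟩
  have h2 : mst S - dist u v ≤ mst B := by
    rw [mst_def (S := B)]
    apply le_csInf (mstSet_nonempty B ⟨v, hv⟩)
    intro c hc
    linarith [h1 c hc]
  linarith

end MSTAux

open MSTAux in
theorem exists_bipartition_mst_ratio_ge {X : Type*} [MetricSpace X] (S : Finset X)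
    (hn : 3 ≤ S.card) :
    ∃ R B : Finset X, R.Nonempty ∧ B.Nonempty ∧ Disjoint R B ∧ R ∪ B = S ∧
      ((S.card : ℝ) - 2) / ((S.card : ℝ) - 1) * mst S ≤ mst R + mst B := by
  classical
  -- find the closest pair
  set P := (S ×ˢ S).filter (fun p => p.1 ≠ p.2) with hP
  have hPne : P.Nonempty := by
    obtain ⟨x, hx, y, hy, hxy⟩ := Finset.one_lt_card.mp (by omega : 1 < S.card)
    exact ⟨(x, y), Finset.mem_filter.mpr ⟨Finset.mem_product.mpr ⟨hx, hy⟩, hxy⟩⟩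
  obtain ⟨⟨u, v⟩, hmem, hmin⟩ := P.exists_min_image (fun p => dist p.1 p.2) hPne
  rw [hP, Finset.mem_filter, Finset.mem_product] at hmem
  obtain ⟨⟨hu, hv⟩, huv⟩ := hmem
  set δ := dist u v with hδdef
  have hδ : ∀ x ∈ S, ∀ y ∈ S, x ≠ y → δ ≤ dist x y := by
    intro x hx y hy hxy
    exact hmin (x, y) (Finset.mem_filter.mpr ⟨Finset.mem_product.mpr ⟨hx, hy⟩, hxy⟩)
  set B := S.erase u with hB
  have hSB : ∀ x, x ∈ S ↔ x = u ∨ x ∈ B := by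
    intro x
    constructor
    · intro hx
      by_cases hxu : x = u
      · exact Or.inl hxu
      · exact Or.inr (Finset.mem_erase.mpr ⟨hxu, hx⟩)
    · rintro (rfl | hx)
      · exact hu
      · exact (Finset.mem_erase.mp hx).2
  have hvB : v ∈ B := Finset.mem_erase.mpr ⟨Ne.symm huv, hv⟩
  have hBcard : B.card = S.card - 1 := Finset.card_erase_of_mem hu
  refine ⟨{u}, B, Finset.singleton_nonempty u, ⟨v, hvB⟩, ?_, ?_, ?_⟩
  · rw [Finset.disjoint_singleton_left]
    exact Finset.notMem_erase u S
  · rw [← Finset.insert_eq, Finset.insert_erase hu]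
  · have h1 : ((S.card : ℝ) - 1) * δ ≤ mst S := mst_lower S (by omega) δ hδ
    have h2 : mst S ≤ mst B + δ := mst_le_add S B u v (Finset.notMem_erase u S) hvB hSB
    have h3 : mst ({u} : Finset X) = 0 := mst_singleton u
    have h4 : 0 ≤ mst S := mst_nonneg S
    have hc : (3 : ℝ) ≤ (S.card : ℝ) := by exact_mod_cast hn
    rw [h3, zero_add, div_mul_eq_mul_div, div_le_iff₀ (by linarith)]
    nlinarith [h1, h2, h4]
end

section
/- Let P be a set of n distinct points in Euclidean space ℝ^d with n ≥ 2. Then the sum, over all subsets R with ∅ ≠ R ⊊ P, of mst(R) + mst(P \ R), is at least ((n−2)/(n−1)) · (2^n − 2) · mst(P). Equivalently, the average of the EMST-ratio (mst(R)+mst(P\R))/mst(P) over all 2^n − 2 proper 2-colorings of P is at least (n−2)/(n−1). -/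
open scoped Classical

open SimpleGraph Finset

section GraphLemmas

variable {V : Type*}

/-- Edge cost of a graph on a finite vertex type. -/
noncomputable def ecost [Finite V] (W : Sym2 V → ℝ) (G : SimpleGraph V) : ℝ :=
  ∑ e ∈ (G.edgeSet.toFinite).toFinset, W e

lemma my_connected_delete (G : SimpleGraph V) (hc : G.Connected)
    {e : Sym2 V} (hb : ¬ G.IsBridge e) :
    (G \ SimpleGraph.fromEdgeSet {e}).Connected := by
  induction e with
  | _ u v =>
  set H := G \ SimpleGraph.fromEdgeSet {s(u,v)} with hH
  have key : ∀ x y : V, G.Adj x y → H.Reachable x y := by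
    intro x y hxy
    by_cases hexy : s(x,y) = s(u,v)
    · have huv : G.Adj u v := by
        rw [Sym2.eq_iff] at hexy
        rcases hexy with ⟨rfl, rfl⟩ | ⟨rfl, rfl⟩
        exacts [hxy, hxy.symm]
      have hr : H.Reachable u v := by
        by_contra hr
        exact hb (isBridge_iff.mpr hr)
      rw [Sym2.eq_iff] at hexy
      rcases hexy with ⟨rfl, rfl⟩ | ⟨rfl, rfl⟩
      exacts [hr, hr.symm]
    · exact SimpleGraph.Adj.reachable (by
        rw [hH]
        refine ⟨hxy, ?_⟩
        simp only [fromEdgeSet_adj, Set.mem_singleton_iff]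
        tauto)
  have : Nonempty V := hc.nonempty
  refine ⟨?_⟩
  intro x y
  obtain ⟨p, -⟩ := hc.preconnected.set_univ_walk_nonempty x y
  clear hb
  induction p with
  | nil => exact Reachable.refl _
  | cons h p ih => exact (key _ _ h).trans ih

lemma my_exists_tree_le [Finite V] (W : Sym2 V → ℝ) (hW : ∀ e, 0 ≤ W e) :
    ∀ (G : SimpleGraph V), G.Connected →
      ∃ T : SimpleGraph V, T.IsTree ∧ ecost W T ≤ ecost W G := by
  intro G
  generalize hn : (G.edgeSet.toFinite).toFinset.card = n
  induction n using Nat.strong_induction_on generalizing G with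
  | _ n IH =>
  intro hc
  by_cases hac : G.IsAcyclic
  · exact ⟨G, ⟨hc, hac⟩, le_rfl⟩
  · simp only [IsAcyclic, not_forall, not_not] at hac
    obtain ⟨v, c, hcyc⟩ := hac
    have hlen := hcyc.three_le_length
    have hne : c.edges ≠ [] := by
      intro h
      rw [← c.length_edges, h] at hlen
      simp at hlen
    obtain ⟨e, he⟩ := List.exists_mem_of_ne_nil _ hne
    have heG : e ∈ G.edgeSet := c.edges_subset_edgeSet he
    have hb : ¬ G.IsBridge e := by
      rw [isBridge_iff_forall_cycle_notMem heG]
      push_neg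
      exact ⟨v, c, hcyc, he⟩
    set G' := G \ SimpleGraph.fromEdgeSet {e} with hG'
    have hc' : G'.Connected := my_connected_delete G hc hb
    have hEdge : (G'.edgeSet.toFinite).toFinset = (G.edgeSet.toFinite).toFinset.erase e := by
      ext f
      simp only [Set.Finite.mem_toFinset, Finset.mem_erase, hG']
      rw [edgeSet_sdiff, edgeSet_fromEdgeSet, edgeSet_sdiff_sdiff_isDiag]
      simp [Set.Finite.mem_toFinset, and_comm]
    have hcard : (G'.edgeSet.toFinite).toFinset.card < n := by
      rw [hEdge, Finset.card_erase_of_mem (by rwa [Set.Finite.mem_toFinset]), hn]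
      have : e ∈ (G.edgeSet.toFinite).toFinset := by rwa [Set.Finite.mem_toFinset]
      have : 0 < n := by
        rw [← hn]
        exact Finset.card_pos.mpr ⟨e, this⟩
      omega
    obtain ⟨T, hT, hTle⟩ := IH _ hcard G' rfl hc'
    refine ⟨T, hT, hTle.trans ?_⟩
    unfold ecost
    rw [hEdge]
    exact Finset.sum_le_sum_of_subset_of_nonneg (Finset.erase_subset _ _)
      (fun i _ _ => hW i)

lemma my_exists_tree (V : Type*) [Finite V] [Nonempty V] : ∃ T : SimpleGraph V, T.IsTree := by
  obtain ⟨T, hT, -⟩ := my_exists_tree_le (V := V) (fun _ => (0:ℝ)) (fun _ => le_rfl) ⊤ connected_top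
  exact ⟨T, hT⟩

lemma my_connected_iff_of_adj {G : SimpleGraph V} (hG : G.Connected) (f : V → Prop)
    (h : ∀ u v, G.Adj u v → (f u ↔ f v)) (x y : V) : f x ↔ f y := by
  obtain ⟨p, -⟩ := hG.preconnected.set_univ_walk_nonempty x y
  induction p with
  | nil => exact Iff.rfl
  | cons ha p ih => exact (h _ _ ha).trans ih


end GraphLemmas

section MST
variable {X : Type*} [MetricSpace X] (S : Finset X)

noncomputable def distW : Sym2 S → ℝ :=
  Sym2.lift ⟨fun (u v : S) => dist (u : X) (v : X), fun _ _ => dist_comm _ _⟩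

lemma distW_nonneg (e : Sym2 S) : 0 ≤ distW S e := by
  induction e with
  | _ u v => exact dist_nonneg

lemma ecost_nonneg (G : SimpleGraph S) : 0 ≤ ecost (distW S) G :=
  Finset.sum_nonneg fun e _ => distW_nonneg S e

lemma mst_eq_sInf : mst S = sInf ((ecost (distW S)) '' {G : SimpleGraph S | G.IsTree}) := by
  unfold mst
  congr 1
  ext c
  simp only [Set.mem_setOf_eq, Set.mem_image]
  constructor
  · rintro ⟨G, hG, rfl⟩
    exact ⟨G, hG, (finsum_mem_eq_finite_toFinset_sum _ _).symm⟩
  · rintro ⟨G, hG, rfl⟩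
    refine ⟨G, hG, ?_⟩
    exact (finsum_mem_eq_finite_toFinset_sum _ (G.edgeSet.toFinite)).symm

lemma mst_le_ecost (G : SimpleGraph S) (hG : G.IsTree) : mst S ≤ ecost (distW S) G := by
  rw [mst_eq_sInf]
  exact csInf_le ⟨0, by rintro c ⟨G', hG', rfl⟩; exact ecost_nonneg S G'⟩
    ⟨G, hG, rfl⟩

lemma mst_nonneg : 0 ≤ mst S := by
  rw [mst_eq_sInf]
  rcases Set.eq_empty_or_nonempty ((ecost (distW S)) '' {G : SimpleGraph S | G.IsTree}) with h | h
  · rw [h]; simp [Real.sInf_empty]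
  · exact le_csInf h (by rintro c ⟨G, hG, rfl⟩; exact ecost_nonneg S G)

lemma mst_exists (hS : S.Nonempty) :
    ∃ T : SimpleGraph S, T.IsTree ∧ mst S = ecost (distW S) T := by
  have : Nonempty S := ⟨⟨hS.choose, hS.choose_spec⟩⟩
  obtain ⟨T0, hT0⟩ := my_exists_tree (↥S)
  have hne : ((ecost (distW S)) '' {G : SimpleGraph S | G.IsTree}).Nonempty :=
    ⟨_, ⟨T0, hT0, rfl⟩⟩
  have hfin : ((ecost (distW S)) '' {G : SimpleGraph S | G.IsTree}).Finite :=
    (Set.toFinite _).image _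
  have := hne.csInf_mem hfin
  rw [← mst_eq_sInf] at this
  obtain ⟨T, hT, hc⟩ := this
  exact ⟨T, hT, hc.symm⟩

lemma mst_le_connected (G : SimpleGraph S) (hG : G.Connected) :
    mst S ≤ ecost (distW S) G := by
  obtain ⟨T, hT, hle⟩ := my_exists_tree_le (distW S) (distW_nonneg S) G hG
  exact (mst_le_ecost S T hT).trans hle

set_option maxHeartbeats 1000000 in
lemma mst_glue {X : Type*} [MetricSpace X] [DecidableEq X] (S A : Finset X) (hA : A ⊆ S) {a b : X}
    (ha : a ∈ A) (hb : b ∈ S \ A) :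
    mst S ≤ mst A + mst (S \ A) + dist a b := by
  set B := S \ A with hBdef
  obtain ⟨TA, hTA, hcA⟩ := mst_exists A ⟨a, ha⟩
  obtain ⟨TB, hTB, hcB⟩ := mst_exists B ⟨b, hb⟩
  have hBS : B ⊆ S := Finset.sdiff_subset
  have hab : a ≠ b := by
    intro h
    rw [hBdef, Finset.mem_sdiff] at hb
    exact hb.2 (h ▸ ha)
  set a' : ↥S := (⟨a, hA ha⟩ : ↥S) with ha'
  set b' : ↥S := (⟨b, hBS hb⟩ : ↥S) with hb'
  set φA : ↥A → ↥S := fun x => ⟨↑x, hA x.2⟩ with hφA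
  set φB : ↥B → ↥S := fun x => ⟨↑x, hBS x.2⟩ with hφB
  have hφAinj : Function.Injective φA := by
    intro x y h
    have : (φA x).val = (φA y).val := congrArg Subtype.val h
    exact Subtype.ext this
  have hφBinj : Function.Injective φB := by
    intro x y h
    have : (φB x).val = (φB y).val := congrArg Subtype.val h
    exact Subtype.ext this
  set H : SimpleGraph ↥S := {
    Adj := fun u v =>
      (∃ (hu : ↑u ∈ A) (hv : ↑v ∈ A), TA.Adj ⟨↑u, hu⟩ ⟨↑v, hv⟩) ∨
      (∃ (hu : ↑u ∈ B) (hv : ↑v ∈ B), TB.Adj ⟨↑u, hu⟩ ⟨↑v, hv⟩) ∨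
      (u = a' ∧ v = b') ∨ (u = b' ∧ v = a')
    symm := by
      refine ⟨?_⟩
      rintro u v (⟨hu, hv, h⟩ | ⟨hu, hv, h⟩ | ⟨rfl, rfl⟩ | ⟨rfl, rfl⟩)
      · exact Or.inl ⟨hv, hu, h.symm⟩
      · exact Or.inr (Or.inl ⟨hv, hu, h.symm⟩)
      · exact Or.inr (Or.inr (Or.inr ⟨rfl, rfl⟩))
      · exact Or.inr (Or.inr (Or.inl ⟨rfl, rfl⟩))
    loopless := by
      refine ⟨?_⟩
      rintro u (⟨hu, hv, h⟩ | ⟨hu, hv, h⟩ | ⟨rfl, h⟩ | ⟨rfl, h⟩)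
      · exact TA.loopless.irrefl _ h
      · exact TB.loopless.irrefl _ h
      · exact hab (congrArg Subtype.val h)
      · exact hab (congrArg Subtype.val h.symm) } with hHdef
  -- graph homomorphisms
  have hmapA : ∀ x y : ↥A, TA.Adj x y → H.Adj (φA x) (φA y) := by
    intro x y h
    refine Or.inl ⟨x.2, y.2, ?_⟩
    convert h <;> exact Subtype.ext rfl
  have hmapB : ∀ x y : ↥B, TB.Adj x y → H.Adj (φB x) (φB y) := by
    intro x y h
    refine Or.inr (Or.inl ⟨x.2, y.2, ?_⟩)
    convert h <;> exact Subtype.ext rfl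
  have hAreach : ∀ u : ↥S, (hu : ↑u ∈ A) → H.Reachable u a' := by
    intro u hu
    have := hTA.isConnected.preconnected ⟨↑u, hu⟩ ⟨a, ha⟩
    have := this.map (⟨φA, fun {x y} h => hmapA x y h⟩ : TA →g H)
    convert this using 2 <;> exact Subtype.ext rfl
  have hBreach : ∀ u : ↥S, (hu : ↑u ∈ B) → H.Reachable u b' := by
    intro u hu
    have := hTB.isConnected.preconnected ⟨↑u, hu⟩ ⟨b, hb⟩
    have := this.map (⟨φB, fun {x y} h => hmapB x y h⟩ : TB →g H)
    convert this using 2 <;> exact Subtype.ext rfl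
  have hreach : ∀ u : ↥S, H.Reachable u a' := by
    intro u
    by_cases hu : ↑u ∈ A
    · exact hAreach u hu
    · have huB : ↑u ∈ B := by
        rw [hBdef, Finset.mem_sdiff]; exact ⟨u.2, hu⟩
      refine (hBreach u huB).trans ?_
      exact Adj.reachable (Or.inr (Or.inr (Or.inr ⟨rfl, rfl⟩)))
  have hHconn : H.Connected := by
    have : Nonempty ↥S := ⟨a'⟩
    refine ⟨fun u v => (hreach u).trans (hreach v).symm⟩
  -- edge set decomposition
  set EA := (TA.edgeSet.toFinite.toFinset).image (Sym2.map φA) with hEA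
  set EB := (TB.edgeSet.toFinite.toFinset).image (Sym2.map φB) with hEB
  have memEA : ∀ u v : ↥S, s(u,v) ∈ EA ↔
      ∃ (hu : ↑u ∈ A) (hv : ↑v ∈ A), TA.Adj ⟨↑u, hu⟩ ⟨↑v, hv⟩ := by
    intro u v
    rw [hEA, Finset.mem_image]
    constructor
    · rintro ⟨e', he', hmap⟩
      induction e' with
      | _ x y =>
        rw [Set.Finite.mem_toFinset, mem_edgeSet] at he'
        rw [Sym2.map_pair_eq, Sym2.eq_iff] at hmap
        rcases hmap with ⟨hx, hy⟩ | ⟨hx, hy⟩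
        · refine ⟨hx ▸ x.2, hy ▸ y.2, ?_⟩
          convert he' using 1 <;>
            (apply Subtype.ext; simp [← hx, ← hy, hφA])
        · refine ⟨hy ▸ y.2, hx ▸ x.2, ?_⟩
          have he'' := he'.symm
          convert he'' using 1 <;> (apply Subtype.ext; simp [← hx, ← hy, hφA])
    · rintro ⟨hu, hv, h⟩
      refine ⟨s(⟨↑u, hu⟩, ⟨↑v, hv⟩), ?_, ?_⟩
      · rw [Set.Finite.mem_toFinset, mem_edgeSet]; exact h
      · rw [Sym2.map_pair_eq]
  have memEB : ∀ u v : ↥S, s(u,v) ∈ EB ↔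
      ∃ (hu : ↑u ∈ B) (hv : ↑v ∈ B), TB.Adj ⟨↑u, hu⟩ ⟨↑v, hv⟩ := by
    intro u v
    rw [hEB, Finset.mem_image]
    constructor
    · rintro ⟨e', he', hmap⟩
      induction e' with
      | _ x y =>
        rw [Set.Finite.mem_toFinset, mem_edgeSet] at he'
        rw [Sym2.map_pair_eq, Sym2.eq_iff] at hmap
        rcases hmap with ⟨hx, hy⟩ | ⟨hx, hy⟩
        · refine ⟨hx ▸ x.2, hy ▸ y.2, ?_⟩
          convert he' using 1 <;>
            (apply Subtype.ext; simp [← hx, ← hy, hφB])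
        · refine ⟨hy ▸ y.2, hx ▸ x.2, ?_⟩
          have he'' := he'.symm
          convert he'' using 1 <;> (apply Subtype.ext; simp [← hx, ← hy, hφB])
    · rintro ⟨hu, hv, h⟩
      refine ⟨s(⟨↑u, hu⟩, ⟨↑v, hv⟩), ?_, ?_⟩
      · rw [Set.Finite.mem_toFinset, mem_edgeSet]; exact h
      · rw [Sym2.map_pair_eq]
  have hedge : (H.edgeSet.toFinite).toFinset = (EA ∪ EB) ∪ {s(a',b')} := by
    ext e
    induction e with
    | _ u v =>
      rw [Set.Finite.mem_toFinset, mem_edgeSet]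
      rw [Finset.mem_union, Finset.mem_union, Finset.mem_singleton, memEA, memEB]
      constructor
      · rintro (h | h | ⟨rfl, rfl⟩ | ⟨rfl, rfl⟩)
        · exact Or.inl (Or.inl h)
        · exact Or.inl (Or.inr h)
        · exact Or.inr rfl
        · exact Or.inr (Sym2.eq_swap)
      · rintro (⟨h | h⟩ | h)
        · exact Or.inl h
        · exact Or.inr (Or.inl h)
        · rw [Sym2.eq_iff] at h
          rcases h with ⟨rfl, rfl⟩ | ⟨rfl, rfl⟩
          · exact Or.inr (Or.inr (Or.inl ⟨rfl, rfl⟩))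
          · exact Or.inr (Or.inr (Or.inr ⟨rfl, rfl⟩))
  -- disjointness
  have hnotinA : ∀ u v : ↥S, s(u,v) ∈ EA → (↑u ∈ A ∧ ↑v ∈ A) := by
    intro u v h
    rw [memEA] at h
    obtain ⟨hu, hv, -⟩ := h
    exact ⟨hu, hv⟩
  have hdisjAB : Disjoint EA EB := by
    rw [Finset.disjoint_left]
    intro e heA heB
    induction e with
    | _ u v =>
      obtain ⟨hu, -⟩ := hnotinA u v heA
      rw [memEB] at heB
      obtain ⟨hu', -, -⟩ := heB
      rw [hBdef, Finset.mem_sdiff] at hu'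
      exact hu'.2 hu
  have habnotin : s(a',b') ∉ EA ∪ EB := by
    rw [Finset.mem_union]
    rintro (h | h)
    · obtain ⟨-, hv⟩ := hnotinA a' b' h
      rw [hBdef, Finset.mem_sdiff] at hb
      exact hb.2 hv
    · rw [memEB] at h
      obtain ⟨hu, -, -⟩ := h
      rw [hBdef, Finset.mem_sdiff] at hu
      exact hu.2 ha
  -- cost computation
  have hw : ∀ e : Sym2 ↥A, distW S (Sym2.map φA e) = distW A e := by
    intro e
    induction e with
    | _ x y =>
      rw [Sym2.map_pair_eq]
      simp only [distW, Sym2.lift_mk]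
      rfl
  have hwB : ∀ e : Sym2 ↥B, distW S (Sym2.map φB e) = distW B e := by
    intro e
    induction e with
    | _ x y =>
      rw [Sym2.map_pair_eq]
      simp only [distW, Sym2.lift_mk]
      rfl
  have hcost : ecost (distW S) H = ecost (distW A) TA + ecost (distW B) TB + dist a b := by
    unfold ecost
    rw [hedge, Finset.sum_union (by
        rw [Finset.disjoint_singleton_right]; exact habnotin),
      Finset.sum_union hdisjAB, Finset.sum_singleton]
    congr 2
    · rw [hEA, Finset.sum_image (fun x _ y _ h => Sym2.map.injective hφAinj h)]
      exact Finset.sum_congr rfl fun e _ => hw e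
    · rw [hEB, Finset.sum_image (fun x _ y _ h => Sym2.map.injective hφBinj h)]
      exact Finset.sum_congr rfl fun e _ => hwB e
  calc mst S ≤ ecost (distW S) H := mst_le_connected S H hHconn
    _ = mst A + mst B + dist a b := by rw [hcost, hcA, hcB]

lemma aux_choose_sum (q : ℕ) :
    ∑ j ∈ Finset.range (q + 1), (q.choose j : ℝ) / (j + 1) =
      (2 ^ (q + 1) - 1) / (q + 1) := by
  have key : ∀ j ∈ Finset.range (q + 1), (q.choose j : ℝ) / (j + 1)
      = ((q+1).choose (j+1) : ℝ) / (q + 1) := by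
    intro j hj
    have h := Nat.add_one_mul_choose_eq q j
    have h' : ((q:ℝ) + 1) * (q.choose j : ℝ) = ((q+1).choose (j+1) : ℝ) * ((j:ℝ) + 1) := by
      exact_mod_cast h
    have hj1 : ((j:ℝ) + 1) ≠ 0 := by positivity
    have hq1 : ((q:ℝ) + 1) ≠ 0 := by positivity
    field_simp
    linarith [h']
  rw [Finset.sum_congr rfl key, ← Finset.sum_div]
  congr 1
  have h2 : ∑ j ∈ Finset.range (q + 1), ((q+1).choose (j+1) : ℝ)
      = ((∑ j ∈ Finset.range (q + 1), (q+1).choose (j+1) : ℕ) : ℝ) := by push_cast; ring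
  rw [h2]
  have h3 : ∑ j ∈ Finset.range (q + 1), (q+1).choose (j+1) = 2 ^ (q+1) - 1 := by
    have h4 := Nat.sum_range_choose (q+1)
    have h5 := Finset.sum_range_succ' (fun i => (q+1).choose i) (q+1)
    rw [h5] at h4
    simp only [Nat.choose_zero_right] at h4
    omega
  rw [h3]
  have h6 : 1 ≤ 2 ^ (q+1) := Nat.one_le_two_pow
  push_cast [h6]
  ring

lemma aux_powerset_sum {α : Type*} (F : Finset α) :
    ∑ D ∈ F.powerset, (1:ℝ) / (D.card + 1) = (2 ^ (F.card + 1) - 1) / (F.card + 1) := by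
  rw [Finset.sum_powerset]
  rw [← aux_choose_sum F.card]
  refine Finset.sum_congr rfl fun j hj => ?_
  have : ∀ D ∈ F.powersetCard j, (1:ℝ)/(D.card + 1) = 1/(j+1) := by
    intro D hD
    rw [(Finset.mem_powersetCard.mp hD).2]
  rw [Finset.sum_congr rfl this, Finset.sum_const, Finset.card_powersetCard, nsmul_eq_mul]
  rw [mul_one_div]

lemma aux_filter_sum {α : Type*} (E : Finset α) {e : α} (he : e ∈ E) :
    ∑ C ∈ E.powerset.filter (fun C => e ∈ C), (1:ℝ) / C.card =
      (2 ^ E.card - 1) / E.card := by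
  set F := E.erase e with hF
  have heF : e ∉ F := Finset.notMem_erase e E
  have hins : insert e F = E := Finset.insert_erase he
  have hcard : F.card + 1 = E.card := by
    rw [← hins, Finset.card_insert_of_notMem heF]
  rw [← hins, Finset.powerset_insert, Finset.filter_union]
  have h1 : F.powerset.filter (fun C => e ∈ C) = ∅ := by
    rw [Finset.filter_eq_empty_iff]
    intro C hC
    exact fun hemem => heF (Finset.mem_powerset.mp hC hemem)
  have h2 : (F.powerset.image (insert e)).filter (fun C => e ∈ C)
      = F.powerset.image (insert e) := by
    rw [Finset.filter_eq_self]
    intro C hC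
    obtain ⟨D, -, rfl⟩ := Finset.mem_image.mp hC
    exact Finset.mem_insert_self e D
  rw [h1, Finset.empty_union, h2]
  rw [Finset.sum_image (by
    intro D hD D' hD' hins'
    have hD1 : e ∉ D := fun h => heF (Finset.mem_powerset.mp hD h)
    have hD2 : e ∉ D' := fun h => heF (Finset.mem_powerset.mp hD' h)
    rw [← Finset.erase_insert hD1, ← Finset.erase_insert hD2, hins'])]
  have : ∀ D ∈ F.powerset, (1:ℝ)/((insert e D).card) = 1/(D.card + 1) := by
    intro D hD
    have hD1 : e ∉ D := fun h => heF (Finset.mem_powerset.mp hD h)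
    rw [Finset.card_insert_of_notMem hD1]
    push_cast
    ring_nf
  rw [Finset.sum_congr rfl this, aux_powerset_sum]
  have hc : ((F.card:ℝ)+1) = ((insert e F).card : ℝ) := by
    rw [Finset.card_insert_of_notMem heF]
    push_cast
    ring
  rw [hc]
  norm_num [Finset.card_insert_of_notMem heF]

def crossP {X : Type*} {P : Finset X} (R : Finset X) : Sym2 ↥P → Prop :=
  Sym2.lift ⟨fun u v => ¬(((u : X) ∈ R) ↔ ((v : X) ∈ R)),
    fun u v => by rw [eq_iff_iff]; tauto⟩

lemma crossP_mk {X : Type*} {P : Finset X} (R : Finset X) (u v : ↥P) :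
    crossP (P := P) R s(u, v) ↔ ¬(((u : X) ∈ R) ↔ ((v : X) ∈ R)) := Iff.rfl





lemma cross_inj {X : Type*} {P : Finset X} {T : SimpleGraph ↥P} (hT : T.Connected)
    {R R' : Finset X} (hR : R ⊆ P) (hR' : R' ⊆ P)
    (h : ∀ u v : ↥P, T.Adj u v → (crossP (P := P) R s(u,v) ↔ crossP (P := P) R' s(u,v)))
    (v0 : ↥P) (h0 : ((v0 : X) ∈ R) ↔ ((v0 : X) ∈ R')) : R = R' := by
  have key : ∀ u : ↥P, (((u : X) ∈ R) ↔ ((u : X) ∈ R')) := by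
    intro u
    have hmain := my_connected_iff_of_adj hT (fun w => (((w : X) ∈ R) ↔ ((w : X) ∈ R')))
      (fun x y hxy => by
        have := h x y hxy
        rw [crossP_mk, crossP_mk] at this
        tauto) u v0
    tauto
  ext x
  constructor
  · intro hx; exact (key ⟨x, hR hx⟩).mp hx
  · intro hx; exact (key ⟨x, hR' hx⟩).mpr hx

lemma cross_nonempty {X : Type*} {P : Finset X} {T : SimpleGraph ↥P} (hT : T.Connected)
    {R : Finset X} (hsub : R ⊆ P) (h1 : R.Nonempty) (h2 : R ≠ P) :
    ∃ u v : ↥P, T.Adj u v ∧ crossP (P := P) R s(u,v) := by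
  by_contra hcon
  push_neg at hcon
  obtain ⟨r, hr⟩ := h1
  obtain ⟨y, hyP, hyR⟩ := Finset.exists_of_ssubset (lt_of_le_of_ne hsub h2)
  have hmain := my_connected_iff_of_adj hT (fun w => ((w : X) ∈ R))
    (fun u v huv => by
      have := hcon u v huv
      rw [crossP_mk] at this
      tauto) ⟨r, hsub hr⟩ ⟨y, hyP⟩
  simp only at hmain
  exact hyR (hmain.mp hr)

theorem average_mst_ratio_ge (d : ℕ) (P : Finset (EuclideanSpace ℝ (Fin d)))
    (hn : 2 ≤ P.card) :
    ((P.card : ℝ) - 2) / ((P.card : ℝ) - 1) * (2 ^ P.card - 2) * mst P ≤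
      ∑ R ∈ P.powerset.filter (fun R => R.Nonempty ∧ R ≠ P), (mst R + mst (P \ R)) := by
  have hPne : P.Nonempty := Finset.card_pos.mp (by omega)
  obtain ⟨T, hT, hTc⟩ := mst_exists P hPne
  set W : Sym2 ↥P → ℝ := distW P with hW
  set E := (T.edgeSet.toFinite).toFinset with hE
  have hmE : E.card + 1 = P.card := by
    have h1 : E = T.edgeFinset := by
      ext e; rw [hE, Set.Finite.mem_toFinset, SimpleGraph.mem_edgeFinset]
    rw [h1, hT.card_edgeFinset, Fintype.card_coe]
  set m := E.card with hm
  have hm1 : 1 ≤ m := by omega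
  set C : Finset (EuclideanSpace ℝ (Fin d)) → Finset (Sym2 ↥P) :=
    fun R => E.filter (crossP (P := P) R) with hC
  set K := P.powerset.filter (fun R => R.Nonempty ∧ R ≠ P) with hK
  have hKmem : ∀ R ∈ K, R ⊆ P ∧ R.Nonempty ∧ R ≠ P := by
    intro R hR
    rw [hK, Finset.mem_filter, Finset.mem_powerset] at hR
    exact ⟨hR.1, hR.2⟩
  -- crossing set nonempty
  have hCne : ∀ R ∈ K, (C R).Nonempty := by
    intro R hR
    obtain ⟨hsub, hne, hneP⟩ := hKmem R hR
    obtain ⟨u, v, huv, hcr⟩ := cross_nonempty hT.isConnected hsub hne hneP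
    refine ⟨s(u,v), ?_⟩
    rw [hC]
    refine Finset.mem_filter.mpr ⟨?_, hcr⟩
    rw [hE, Set.Finite.mem_toFinset, SimpleGraph.mem_edgeSet]
    exact huv
  -- per-coloring inequality
  have hper : ∀ R ∈ K, mst P - (∑ e ∈ C R, W e) / ((C R).card : ℝ)
      ≤ mst R + mst (P \ R) := by
    intro R hR
    obtain ⟨hsub, hne, hneP⟩ := hKmem R hR
    have hglue : ∀ e ∈ C R, mst P ≤ mst R + mst (P \ R) + W e := by
      intro e he
      induction e with
      | _ u v =>
        rw [hC, Finset.mem_filter, crossP_mk] at he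
        obtain ⟨heE, hecr⟩ := he
        by_cases hu : (u : EuclideanSpace ℝ (Fin d)) ∈ R
        · have hv : (v : EuclideanSpace ℝ (Fin d)) ∉ R := fun h => hecr (iff_of_true hu h)
          have hg := mst_glue P R hsub (a := ↑u) (b := ↑v) hu
            (Finset.mem_sdiff.mpr ⟨v.2, hv⟩)
          calc mst P ≤ mst R + mst (P \ R) + dist (u : EuclideanSpace ℝ (Fin d)) (v : EuclideanSpace ℝ (Fin d)) := hg
          _ = mst R + mst (P \ R) + W s(u,v) := rfl
        · have hv : (v : EuclideanSpace ℝ (Fin d)) ∈ R := by tauto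
          have hg := mst_glue P R hsub (a := ↑v) (b := ↑u) hv
            (Finset.mem_sdiff.mpr ⟨u.2, hu⟩)
          calc mst P ≤ mst R + mst (P \ R) + dist (v : EuclideanSpace ℝ (Fin d)) (u : EuclideanSpace ℝ (Fin d)) := hg
          _ = mst R + mst (P \ R) + W s(u,v) := by
            rw [dist_comm (α := EuclideanSpace ℝ (Fin d))]
            rfl
    have hk0 : 0 < (C R).card := Finset.card_pos.mpr (hCne R hR)
    have hkR : (0:ℝ) < ((C R).card : ℝ) := by exact_mod_cast hk0
    have hsum : ((C R).card : ℝ) * mst P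
        ≤ ((C R).card : ℝ) * (mst R + mst (P \ R)) + ∑ e ∈ C R, W e := by
      have h1 : ∑ _e ∈ C R, mst P ≤ ∑ e ∈ C R, (mst R + mst (P \ R) + W e) :=
        Finset.sum_le_sum hglue
      rw [Finset.sum_const, nsmul_eq_mul, Finset.sum_add_distrib, Finset.sum_const,
        nsmul_eq_mul] at h1
      linarith [h1]
    rw [← mul_le_mul_iff_left₀ hkR, sub_mul, div_mul_cancel₀ _ (ne_of_gt hkR)]
    linarith [hsum]
  -- the bijection
  obtain ⟨v0x, hv0x⟩ := hPne
  set Epn := E.powerset.filter (fun Cs => Cs.Nonempty) with hEpn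
  set D := Epn ×ˢ (Finset.univ : Finset Bool) with hD
  have hKcard : K.card = 2 ^ P.card - 2 := by
    have hKeq : K = P.powerset \ {∅, P} := by
      ext R
      simp only [hK, Finset.mem_filter, Finset.mem_sdiff, Finset.mem_insert,
        Finset.mem_singleton, Finset.nonempty_iff_ne_empty]
      tauto
    have hsub2 : ({∅, P} : Finset (Finset (EuclideanSpace ℝ (Fin d)))) ⊆ P.powerset := by
      intro x hx
      simp only [Finset.mem_insert, Finset.mem_singleton] at hx
      rcases hx with rfl | rfl
      · exact Finset.empty_mem_powerset P
      · exact Finset.mem_powerset_self _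
    rw [hKeq, Finset.card_sdiff_of_subset hsub2, Finset.card_powerset]
    have : (∅ : Finset (EuclideanSpace ℝ (Fin d))) ∉ ({P} : Finset (Finset (EuclideanSpace ℝ (Fin d)))) := by
      simp only [Finset.mem_singleton]
      intro h
      have : P.Nonempty := Finset.card_pos.mp (by omega)
      exact this.ne_empty h.symm
    rw [Finset.card_insert_of_notMem this, Finset.card_singleton]
  have hEpncard : Epn.card = 2 ^ m - 1 := by
    have h1 : Epn = E.powerset.erase ∅ := by
      ext Cs
      simp only [hEpn, Finset.mem_filter, Finset.mem_erase, Finset.nonempty_iff_ne_empty]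
      tauto
    rw [h1, Finset.card_erase_of_mem (Finset.empty_mem_powerset E), Finset.card_powerset]
  have hDcard : D.card = K.card := by
    rw [hD, Finset.card_product, hEpncard, hKcard, Finset.card_univ, Fintype.card_bool]
    have h2m : 1 ≤ 2 ^ m := Nat.one_le_two_pow
    have hPm : P.card = m + 1 := hmE.symm
    rw [hPm, pow_succ]
    omega
  have hmaps : ∀ R (hR : R ∈ K), ((C R, decide (v0x ∈ R)) : Finset (Sym2 ↥P) × Bool) ∈ D := by
    intro R hR
    rw [hD, Finset.mem_product]
    refine ⟨?_, Finset.mem_univ _⟩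
    rw [hEpn, Finset.mem_filter, Finset.mem_powerset]
    exact ⟨Finset.filter_subset _ _, hCne R hR⟩
  have hinj : ∀ R1 (h1 : R1 ∈ K), ∀ R2 (h2 : R2 ∈ K),
      ((C R1, decide (v0x ∈ R1)) : Finset (Sym2 ↥P) × Bool) = (C R2, decide (v0x ∈ R2)) →
      R1 = R2 := by
    intro R1 h1 R2 h2 heq
    rw [Prod.mk.injEq] at heq
    obtain ⟨hCeq, hbeq⟩ := heq
    refine cross_inj hT.isConnected (hKmem R1 h1).1 (hKmem R2 h2).1 ?_ ⟨v0x, hv0x⟩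
      (by simpa using decide_eq_decide.mp hbeq)
    intro u v huv
    have heE : s(u,v) ∈ E := by
      rw [hE, Set.Finite.mem_toFinset, SimpleGraph.mem_edgeSet]; exact huv
    have := Finset.ext_iff.mp hCeq s(u,v)
    rw [hC] at this
    simp only [Finset.mem_filter, heE, true_and] at this
    exact this
  have hsurj : ∀ b ∈ D, ∃ R, ∃ (hR : R ∈ K),
      ((C R, decide (v0x ∈ R)) : Finset (Sym2 ↥P) × Bool) = b := by
    intro b hb
    obtain ⟨R, hR, hbR⟩ := Finset.surj_on_of_inj_on_of_card_le
      (fun R (_ : R ∈ K) => ((C R, decide (v0x ∈ R)) : Finset (Sym2 ↥P) × Bool))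
      hmaps (fun R1 R2 h1 h2 h => hinj R1 h1 R2 h2 h) (le_of_eq hDcard) b hb
    exact ⟨R, hR, hbR.symm⟩
  have hsum2 : ∑ R ∈ K, (∑ e ∈ C R, W e) / ((C R).card : ℝ)
      = ∑ p ∈ D, (∑ e ∈ p.1, W e) / (p.1.card : ℝ) :=
    Finset.sum_bij (fun R _ => ((C R, decide (v0x ∈ R)) : Finset (Sym2 ↥P) × Bool))
      hmaps hinj hsurj (fun R hR => rfl)
  have hsum3 : ∑ p ∈ D, (∑ e ∈ p.1, W e) / (p.1.card : ℝ)
      = 2 * ∑ Cs ∈ Epn, (∑ e ∈ Cs, W e) / (Cs.card : ℝ) := by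
    rw [hD, Finset.sum_product, Finset.mul_sum]
    refine Finset.sum_congr rfl fun Cs _ => ?_
    have hb : ∀ y : Bool, (∑ e ∈ ((Cs, y) : Finset (Sym2 ↥P) × Bool).1, W e) /
        ((((Cs, y) : Finset (Sym2 ↥P) × Bool).1).card : ℝ)
        = (∑ e ∈ Cs, W e) / ((Cs.card : ℕ) : ℝ) := fun y => rfl
    rw [Finset.sum_congr rfl (fun y _ => hb y), Finset.sum_const, Finset.card_univ,
      Fintype.card_bool, nsmul_eq_mul]
    norm_num
  have hsum4 : ∑ Cs ∈ Epn, (∑ e ∈ Cs, W e) / (Cs.card : ℝ)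
      = (∑ e ∈ E, W e) * ((2 ^ m - 1) / (m:ℝ)) := by
    have step1 : ∀ Cs ∈ Epn, (∑ e ∈ Cs, W e) / ((Cs.card : ℝ))
        = ∑ e ∈ E, (if e ∈ Cs then W e / (Cs.card:ℝ) else 0) := by
      intro Cs hCs
      rw [hEpn, Finset.mem_filter, Finset.mem_powerset] at hCs
      rw [Finset.sum_ite_mem, Finset.inter_eq_right.mpr hCs.1, Finset.sum_div]
    have step2 : ∀ e ∈ E, ∑ Cs ∈ Epn, (if e ∈ Cs then W e / (Cs.card:ℝ) else 0)
        = W e * ((2 ^ m - 1) / (m:ℝ)) := by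
      intro e he
      rw [← Finset.sum_filter]
      have hfe : Epn.filter (fun Cs => e ∈ Cs) = E.powerset.filter (fun Cs => e ∈ Cs) := by
        ext Cs
        rw [hEpn, Finset.filter_filter, Finset.mem_filter, Finset.mem_filter]
        constructor
        · rintro ⟨hp, -, hm⟩; exact ⟨hp, hm⟩
        · rintro ⟨hp, hm⟩; exact ⟨hp, ⟨e, hm⟩, hm⟩
      rw [hfe]
      have : ∀ Cs ∈ E.powerset.filter (fun Cs => e ∈ Cs),
          W e / (Cs.card:ℝ) = W e * (1 / (Cs.card:ℝ)) := by
        intro Cs _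
        rw [mul_one_div]
      rw [Finset.sum_congr rfl this, ← Finset.mul_sum]
      have haux := aux_filter_sum E he
      rw [show (E.card : ℕ) = m from rfl] at haux
      rw [Finset.filter_congr_decidable] at haux ⊢
      rw [haux]
    calc ∑ Cs ∈ Epn, (∑ e ∈ Cs, W e) / ((Cs.card:ℝ))
        = ∑ Cs ∈ Epn, ∑ e ∈ E, (if e ∈ Cs then W e / (Cs.card:ℝ) else 0) :=
          Finset.sum_congr rfl step1
      _ = ∑ e ∈ E, ∑ Cs ∈ Epn, (if e ∈ Cs then W e / (Cs.card:ℝ) else 0) := Finset.sum_comm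
      _ = ∑ e ∈ E, W e * ((2 ^ m - 1) / (m:ℝ)) := Finset.sum_congr rfl step2
      _ = (∑ e ∈ E, W e) * ((2 ^ m - 1) / (m:ℝ)) := by rw [Finset.sum_mul]
  have hE5 : ∑ e ∈ E, W e = mst P := by
    rw [hTc]
    rfl
  -- assembly
  have main : ∑ R ∈ K, (mst P - (∑ e ∈ C R, W e) / ((C R).card : ℝ))
      ≤ ∑ R ∈ K, (mst R + mst (P \ R)) := Finset.sum_le_sum hper
  rw [Finset.sum_sub_distrib, Finset.sum_const, nsmul_eq_mul, hsum2, hsum3, hsum4, hE5] at main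
  refine le_trans (le_of_eq ?_) main
  have hKcast : ((K.card : ℕ) : ℝ) = 2 ^ P.card - 2 := by
    rw [hKcard]
    have h2 : 2 ≤ 2 ^ P.card := by
      calc 2 = 2 ^ 1 := (pow_one 2).symm
      _ ≤ 2 ^ P.card := Nat.pow_le_pow_right (by norm_num) (by omega)
    push_cast [h2]
    ring
  rw [hKcast]
  have hPm : P.card = m + 1 := hmE.symm
  rw [hPm]
  have hmR : (1:ℝ) ≤ (m:ℝ) := by exact_mod_cast hm1
  have hmne : (m:ℝ) ≠ 0 := by linarith
  push_cast
  rw [add_sub_cancel_right]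
  field_simp
  ring
end MST
end

section
/- For every integer d ≥ 1, the limit as n → ∞ of the sum over k = 1, …, n−1 of C(n,k) · (k^{1−1/d} + (n−k)^{1−1/d}) / (n^{1−1/d} · (2^n − 2)) equals 2^{1/d}, where C(n,k) denotes the binomial coefficient. -/
open scoped Classical

open Finset Filter

lemma sumA (m : ℕ) : ∑ k ∈ range (m+2), k * (m+1).choose k = (m+1) * 2^m := by
  rw [Finset.sum_range_succ']
  simp only [Nat.choose_zero_right, Nat.zero_mul, add_zero]
  have h : ∀ i, (i+1) * (m+1).choose (i+1) = (m+1) * m.choose i := fun i => by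
    rw [mul_comm]; exact (Nat.add_one_mul_choose_eq m i).symm
  rw [Finset.sum_congr rfl fun i _ => h i, ← Finset.mul_sum, Nat.sum_range_choose]

lemma sumB (m : ℕ) : ∑ k ∈ range (m+2), (k*k) * (m+1).choose k
    = (m+1) * ∑ j ∈ range (m+1), (j+1) * m.choose j := by
  rw [Finset.sum_range_succ']
  simp only [Nat.choose_zero_right, Nat.zero_mul, add_zero]
  have h0 : ∀ i, (i+1) * (m+1).choose (i+1) = (m+1) * m.choose i := fun i => by
    rw [mul_comm]; exact (Nat.add_one_mul_choose_eq m i).symm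
  have h : ∀ i, ((i+1)*(i+1)) * (m+1).choose (i+1) = (m+1) * ((i+1) * m.choose i) := fun i => by
    rw [mul_assoc, h0 i]; ring
  rw [Finset.sum_congr rfl fun i _ => h i, ← Finset.mul_sum]

lemma sumC (l : ℕ) : ∑ j ∈ range (l+2), (j+1) * (l+1).choose j = (l+3) * 2^l := by
  have h1 : ∑ j ∈ range (l+2), (j+1) * (l+1).choose j
      = (∑ j ∈ range (l+2), j * (l+1).choose j) + ∑ j ∈ range (l+2), (l+1).choose j := by
    rw [← Finset.sum_add_distrib]
    exact Finset.sum_congr rfl fun j _ => by ring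
  rw [h1, sumA l, Nat.sum_range_choose]; ring

lemma varsum (n : ℕ) (hn : 2 ≤ n) :
    ∑ k ∈ range (n+1), (n.choose k : ℝ) * (2*(k:ℝ) - (n:ℝ))^2 = (n:ℝ) * 2^n := by
  obtain ⟨l, rfl⟩ : ∃ l, n = l + 2 := ⟨n - 2, by omega⟩
  have h0 : ∑ k ∈ range (l+3), ((l+2).choose k : ℝ) = 2^(l+2) := by
    exact_mod_cast congrArg (Nat.cast (R := ℝ)) (Nat.sum_range_choose (l+2))
  have t1 := congrArg (Nat.cast (R := ℝ)) (sumA (l+1))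
  push_cast at t1
  have hb := sumB (l+1)
  rw [sumC l] at hb
  have t2 := congrArg (Nat.cast (R := ℝ)) hb
  push_cast at t2
  simp only [show l+1+2 = l+3 from rfl, show l+1+1 = l+2 from rfl] at t1 t2
  push_cast
  simp only [show l+2+1 = l+3 from rfl]
  have hexp : ∀ k ∈ range (l+3), ((l+2).choose k : ℝ) * (2*(k:ℝ) - ((l:ℝ)+2))^2
      = 4*((k:ℝ)*(k:ℝ) * (l+2).choose k) - (4*((l:ℝ)+2))*((k:ℝ) * (l+2).choose k)
        + ((l:ℝ)+2)^2 * (l+2).choose k := fun k _ => by ring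
  rw [Finset.sum_congr rfl hexp, Finset.sum_add_distrib, Finset.sum_sub_distrib,
    ← Finset.mul_sum, ← Finset.mul_sum, ← Finset.mul_sum, h0, t1, t2]
  ring

lemma chooseIoo (n : ℕ) (hn : 1 ≤ n) :
    ∑ k ∈ Finset.Ioo 0 n, (n.choose k : ℝ) = 2^n - 2 := by
  have hr : ∑ k ∈ Finset.range (n+1), (n.choose k : ℝ) = 2^n := by
    exact_mod_cast congrArg (Nat.cast (R := ℝ)) (Nat.sum_range_choose n)
  rw [Finset.range_eq_Ico, Finset.sum_eq_sum_Ico_succ_bot (by omega : 0 < n+1),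
    Finset.sum_Ico_succ_top (by omega : 1 ≤ n)] at hr
  rw [show Finset.Ioo 0 n = Finset.Ico 1 n from (Finset.Ico_add_one_left_eq_Ioo 0 n).symm]
  simp only [Nat.choose_zero_right, Nat.choose_self, Nat.cast_one] at hr
  linarith

set_option maxHeartbeats 1000000 in
theorem tendsto_average_ratio_sum (d : ℕ) (hd : 1 ≤ d) :
    Filter.Tendsto (fun n : ℕ =>
        ∑ k ∈ Finset.Ioo 0 n,
          (n.choose k : ℝ) *
              ((k : ℝ) ^ ((1 : ℝ) - 1 / (d : ℝ)) + ((n - k : ℕ) : ℝ) ^ ((1 : ℝ) - 1 / (d : ℝ))) /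
            ((n : ℝ) ^ ((1 : ℝ) - 1 / (d : ℝ)) * (2 ^ n - 2)))
      Filter.atTop (nhds ((2 : ℝ) ^ ((1 : ℝ) / (d : ℝ)))) := by
  set α : ℝ := (1 : ℝ) - 1 / (d : ℝ) with hαdef
  have hdR : (1:ℝ) ≤ (d:ℝ) := by exact_mod_cast hd
  have hd0 : (0:ℝ) < d := by linarith
  have hα0 : 0 ≤ α := by
    have : 1/(d:ℝ) ≤ 1 := by rw [div_le_one hd0]; exact hdR
    rw [hαdef]; linarith
  have hα1 : α ≤ 1 := by
    have : 0 < 1/(d:ℝ) := by positivity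
    rw [hαdef]; linarith
  have hval : (2:ℝ) ^ ((1:ℝ)/(d:ℝ)) = 2 ^ ((1:ℝ) - α) := by
    rw [hαdef]; norm_num
  -- Upper bound
  have hupper : ∀ n : ℕ, 2 ≤ n →
      (∑ k ∈ Finset.Ioo 0 n, (n.choose k : ℝ) * ((k:ℝ)^α + ((n-k:ℕ):ℝ)^α))
        / ((n:ℝ)^α * (2^n - 2)) ≤ (2:ℝ) ^ ((1:ℝ)/(d:ℝ)) := by
    intro n hn
    have hn0 : (0:ℝ) < n := by
      have : (0:ℕ) < n := by omega
      exact_mod_cast this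
    have h4 : (4:ℝ) ≤ 2^n := by
      have h : (4:ℕ) ≤ 2^n := by
        calc (4:ℕ) = 2^2 := by norm_num
          _ ≤ 2^n := Nat.pow_le_pow_right (by norm_num) hn
      exact_mod_cast h
    have hp2 : (0:ℝ) < 2^n - 2 := by linarith
    have hnα : (0:ℝ) < (n:ℝ)^α := Real.rpow_pos_of_pos hn0 α
    have hterm : ∀ k ∈ Finset.Ioo 0 n,
        (n.choose k : ℝ) * ((k:ℝ)^α + ((n-k:ℕ):ℝ)^α)
          ≤ (n.choose k : ℝ) * (2^((1:ℝ)-α) * (n:ℝ)^α) := by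
      intro k hk
      obtain ⟨hk1, hk2⟩ := Finset.mem_Ioo.mp hk
      have hcast : ((n-k:ℕ):ℝ) = (n:ℝ) - k := by
        rw [Nat.cast_sub hk2.le]
      have ha : (0:ℝ) ≤ (k:ℝ) := Nat.cast_nonneg k
      have hkn : (k:ℝ) ≤ n := by exact_mod_cast hk2.le
      have hb : (0:ℝ) ≤ (n:ℝ) - k := by linarith
      have hcc := (Real.concaveOn_rpow hα0 hα1).2 (Set.mem_Ici.mpr ha) (Set.mem_Ici.mpr hb)
          (by norm_num : (0:ℝ) ≤ 1/2) (by norm_num : (0:ℝ) ≤ 1/2) (by norm_num)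
      simp only [smul_eq_mul] at hcc
      rw [show (1/2:ℝ)*(k:ℝ) + 1/2*((n:ℝ)-k) = (n:ℝ)/2 from by ring] at hcc
      have hdiv : ((n:ℝ)/2)^α = (n:ℝ)^α / 2^α := Real.div_rpow hn0.le (by norm_num) α
      have hsub : (2:ℝ)^((1:ℝ)-α) = 2 / 2^α := by
        rw [Real.rpow_sub (by norm_num : (0:ℝ) < 2), Real.rpow_one]
      have key : (k:ℝ)^α + ((n:ℝ)-k)^α ≤ 2^((1:ℝ)-α) * (n:ℝ)^α := by
        rw [hdiv] at hcc
        rw [hsub, show (2/(2:ℝ)^α)*((n:ℝ)^α) = 2*((n:ℝ)^α/2^α) from by ring]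
        linarith [hcc]
      rw [hcast]
      exact mul_le_mul_of_nonneg_left key (Nat.cast_nonneg _)
    have hsum : ∑ k ∈ Finset.Ioo 0 n, (n.choose k : ℝ) * ((k:ℝ)^α + ((n-k:ℕ):ℝ)^α)
        ≤ 2^((1:ℝ)-α) * (n:ℝ)^α * (2^n - 2) := by
      calc ∑ k ∈ Finset.Ioo 0 n, (n.choose k : ℝ) * ((k:ℝ)^α + ((n-k:ℕ):ℝ)^α)
          ≤ ∑ k ∈ Finset.Ioo 0 n, (n.choose k : ℝ) * (2^((1:ℝ)-α) * (n:ℝ)^α) :=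
            Finset.sum_le_sum hterm
        _ = (∑ k ∈ Finset.Ioo 0 n, (n.choose k : ℝ)) * (2^((1:ℝ)-α) * (n:ℝ)^α) := by
            rw [← Finset.sum_mul]
        _ = 2^((1:ℝ)-α) * (n:ℝ)^α * (2^n - 2) := by
            rw [chooseIoo n (by omega)]; ring
    rw [hval, div_le_iff₀ (by positivity)]
    calc ∑ k ∈ Finset.Ioo 0 n, (n.choose k : ℝ) * ((k:ℝ)^α + ((n-k:ℕ):ℝ)^α)
        ≤ 2^((1:ℝ)-α) * (n:ℝ)^α * (2^n - 2) := hsum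
      _ = 2^((1:ℝ)-α) * ((n:ℝ)^α * (2^n - 2)) := by ring
  -- Lower bound
  have hlower : ∀ n : ℕ, 17 ≤ n →
      2*((1:ℝ)/2 - (n:ℝ)^(-(4:ℝ)⁻¹))^α * (1 - ((n:ℝ)^(-(2:ℝ)⁻¹))/2)
        ≤ (∑ k ∈ Finset.Ioo 0 n, (n.choose k : ℝ) * ((k:ℝ)^α + ((n-k:ℕ):ℝ)^α))
            / ((n:ℝ)^α * (2^n - 2)) := by
    intro n hn
    have hn2 : 2 ≤ n := by omega
    have hn17 : (17:ℝ) ≤ n := by exact_mod_cast hn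
    have hn0 : (0:ℝ) < n := by linarith
    have h4 : (4:ℝ) ≤ 2^n := by
      have h : (4:ℕ) ≤ 2^n := by
        calc (4:ℕ) = 2^2 := by norm_num
          _ ≤ 2^n := Nat.pow_le_pow_right (by norm_num) hn2
      exact_mod_cast h
    have hp2 : (0:ℝ) < 2^n - 2 := by linarith
    have hnα : (0:ℝ) < (n:ℝ)^α := Real.rpow_pos_of_pos hn0 α
    set δ : ℝ := (n:ℝ)^(-(4:ℝ)⁻¹) with hδdef
    set s : ℝ := (n:ℝ)^((2:ℝ)⁻¹) with hsdef
    have hδpos : 0 < δ := Real.rpow_pos_of_pos hn0 _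
    have hspos : 0 < s := Real.rpow_pos_of_pos hn0 _
    have hss : s * s = (n:ℝ) := by
      rw [hsdef, ← Real.rpow_add hn0]; norm_num
    have hδsq : δ^2 = s⁻¹ := by
      rw [hδdef, hsdef, ← Real.rpow_natCast ((n:ℝ)^(-(4:ℝ)⁻¹)) 2, ← Real.rpow_mul hn0.le,
        ← Real.rpow_neg hn0.le]
      norm_num
    have hns : (n:ℝ)^(-(2:ℝ)⁻¹) = s⁻¹ := by
      rw [hsdef, ← Real.rpow_neg hn0.le]
    have hδhalf : δ < 1/2 := by
      have h16n : (16:ℝ) < n := by linarith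
      have h16 : (16:ℝ)^((4:ℝ)⁻¹) = 2 := by
        rw [show (16:ℝ) = 2^(4:ℕ) from by norm_num, ← Real.rpow_natCast 2 4,
          ← Real.rpow_mul (by norm_num)]
        norm_num
      have hq : (2:ℝ) < (n:ℝ)^((4:ℝ)⁻¹) := by
        rw [← h16]
        exact Real.rpow_lt_rpow (by norm_num) h16n (by norm_num)
      have hrepr : δ = ((n:ℝ)^((4:ℝ)⁻¹))⁻¹ := by
        rw [hδdef, Real.rpow_neg hn0.le]
      rw [hrepr]
      rw [show (1:ℝ)/2 = 2⁻¹ from by norm_num]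
      exact inv_strictAnti₀ (by norm_num) hq
    have hhalf0 : (0:ℝ) ≤ 1/2 - δ := by linarith
    have hvar := varsum n hn2
    set P : ℕ → Prop := fun k => |2*(k:ℝ) - (n:ℝ)| < 2*δ*(n:ℝ) with hPdef
    have h2δn : (0:ℝ) < 2*δ*n := by positivity
    have hb1 : (∑ k ∈ (Finset.Ioo 0 n).filter (fun k => ¬ P k), (n.choose k : ℝ)) * (2*δ*n)^2
        ≤ (n:ℝ)*2^n := by
      rw [Finset.sum_mul]
      calc ∑ k ∈ (Finset.Ioo 0 n).filter (fun k => ¬ P k), (n.choose k : ℝ)*(2*δ*n)^2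
          ≤ ∑ k ∈ (Finset.Ioo 0 n).filter (fun k => ¬ P k),
              (n.choose k : ℝ)*(2*(k:ℝ)-(n:ℝ))^2 := by
            refine Finset.sum_le_sum fun k hk => ?_
            have hk' := (Finset.mem_filter.mp hk).2
            have habs : 2*δ*(n:ℝ) ≤ |2*(k:ℝ) - n| := not_lt.mp hk'
            have hsq : (2*δ*(n:ℝ))^2 ≤ (2*(k:ℝ)-n)^2 := by
              calc (2*δ*(n:ℝ))^2 ≤ |2*(k:ℝ) - n|^2 := by
                    exact pow_le_pow_left₀ h2δn.le habs 2
                _ = (2*(k:ℝ)-n)^2 := sq_abs _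
            exact mul_le_mul_of_nonneg_left hsq (Nat.cast_nonneg _)
        _ ≤ ∑ k ∈ Finset.range (n+1), (n.choose k : ℝ)*(2*(k:ℝ)-(n:ℝ))^2 := by
            refine Finset.sum_le_sum_of_subset_of_nonneg ?_ fun k _ _ => by positivity
            intro k hk
            have hm := Finset.mem_Ioo.mp (Finset.filter_subset _ _ hk)
            exact Finset.mem_range.mpr (by omega)
        _ = (n:ℝ)*2^n := hvar
    have hbadsum : ∑ k ∈ (Finset.Ioo 0 n).filter (fun k => ¬ P k), (n.choose k : ℝ)
        ≤ 2^n / (4*δ^2*n) := by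
      have h4p : (0:ℝ) < 4*δ^2*n := by positivity
      rw [le_div_iff₀ h4p]
      nlinarith [hb1, hn0]
    have hsplit := Finset.sum_filter_add_sum_filter_not (Finset.Ioo 0 n) P
      (fun k => (n.choose k : ℝ))
    have hIoo := chooseIoo n (by omega)
    have hgoodsum : (2^n - 2) - 2^n/(4*δ^2*n)
        ≤ ∑ k ∈ (Finset.Ioo 0 n).filter P, (n.choose k : ℝ) := by
      have he : ∑ k ∈ (Finset.Ioo 0 n).filter P, (n.choose k : ℝ)
          = (2^n - 2) - ∑ k ∈ (Finset.Ioo 0 n).filter (fun k => ¬ P k), (n.choose k : ℝ) := by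
        rw [← hIoo, ← hsplit]; ring
      rw [he]; linarith [hbadsum]
    set c : ℝ := (((1:ℝ)/2 - δ)*n)^α with hcdef
    have hbase : (0:ℝ) ≤ ((1:ℝ)/2 - δ)*n := mul_nonneg hhalf0 hn0.le
    have hc0 : 0 ≤ c := Real.rpow_nonneg hbase α
    have hX1 : ∑ k ∈ (Finset.Ioo 0 n).filter P, (n.choose k : ℝ)*(2*c)
        ≤ ∑ k ∈ (Finset.Ioo 0 n).filter P,
            (n.choose k : ℝ)*((k:ℝ)^α + ((n-k:ℕ):ℝ)^α) := by
      refine Finset.sum_le_sum fun k hk => ?_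
      obtain ⟨hmem, hPk⟩ := Finset.mem_filter.mp hk
      obtain ⟨hk1, hk2⟩ := Finset.mem_Ioo.mp hmem
      obtain ⟨hl, hr⟩ := abs_lt.mp hPk
      have hcast : ((n-k:ℕ):ℝ) = (n:ℝ) - k := by rw [Nat.cast_sub hk2.le]
      have hkR : ((1:ℝ)/2 - δ)*n ≤ (k:ℝ) := by linarith
      have hkR2 : ((1:ℝ)/2 - δ)*n ≤ (n:ℝ) - k := by linarith
      have e1 : c ≤ (k:ℝ)^α := Real.rpow_le_rpow hbase hkR hα0
      have e2 : c ≤ ((n:ℝ)-k)^α := Real.rpow_le_rpow hbase hkR2 hα0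
      have hcc : 2*c ≤ (k:ℝ)^α + ((n-k:ℕ):ℝ)^α := by rw [hcast]; linarith
      exact mul_le_mul_of_nonneg_left hcc (Nat.cast_nonneg _)
    have hX2 : ∑ k ∈ (Finset.Ioo 0 n).filter P,
          (n.choose k : ℝ)*((k:ℝ)^α + ((n-k:ℕ):ℝ)^α)
        ≤ ∑ k ∈ Finset.Ioo 0 n, (n.choose k : ℝ)*((k:ℝ)^α + ((n-k:ℕ):ℝ)^α) := by
      refine Finset.sum_le_sum_of_subset_of_nonneg (Finset.filter_subset _ _)
        fun k _ _ => ?_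
      have e1 : (0:ℝ) ≤ (k:ℝ)^α := Real.rpow_nonneg (Nat.cast_nonneg k) α
      have e2 : (0:ℝ) ≤ ((n-k:ℕ):ℝ)^α := Real.rpow_nonneg (Nat.cast_nonneg _) α
      positivity
    have hX : (2*c) * ((2^n - 2) - 2^n/(4*δ^2*n))
        ≤ ∑ k ∈ Finset.Ioo 0 n, (n.choose k : ℝ)*((k:ℝ)^α + ((n-k:ℕ):ℝ)^α) := by
      calc (2*c) * ((2^n - 2) - 2^n/(4*δ^2*n))
          ≤ (2*c) * ∑ k ∈ (Finset.Ioo 0 n).filter P, (n.choose k : ℝ) :=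
            mul_le_mul_of_nonneg_left hgoodsum (by positivity)
        _ = ∑ k ∈ (Finset.Ioo 0 n).filter P, (n.choose k : ℝ)*(2*c) := by
            rw [Finset.mul_sum]; exact Finset.sum_congr rfl fun k _ => mul_comm _ _
        _ ≤ _ := hX1.trans hX2
    have h4δ : 4*δ^2*(n:ℝ) = 4*s := by
      rw [hδsq]; field_simp; linarith [hss]
    have hfrac : (2:ℝ)^n/(4*δ^2*n)/(2^n-2) ≤ s⁻¹/2 := by
      rw [h4δ, div_div, div_le_div_iff₀ (by positivity) (by norm_num)]
      have he : s⁻¹ * (4*s*(2^n-2)) = 4*(2^n-2) := by field_simp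
      rw [he]; linarith
    have hBP : 1 - s⁻¹/2 ≤ ((2^n - 2) - 2^n/(4*δ^2*n))/(2^n-2) := by
      rw [sub_div, div_self hp2.ne']
      linarith [hfrac]
    have hcoef : (0:ℝ) ≤ 2*((1:ℝ)/2 - δ)^α :=
      mul_nonneg (by norm_num) (Real.rpow_nonneg hhalf0 _)
    rw [hns]
    calc 2*((1:ℝ)/2 - δ)^α * (1 - s⁻¹/2)
        ≤ 2*((1:ℝ)/2 - δ)^α * (((2^n - 2) - 2^n/(4*δ^2*n))/(2^n-2)) :=
          mul_le_mul_of_nonneg_left hBP hcoef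
      _ = (2*c) * ((2^n - 2) - 2^n/(4*δ^2*n)) / ((n:ℝ)^α * (2^n-2)) := by
          have halg : ∀ a B P q : ℝ, q ≠ 0 → P ≠ 0 → (2*(a*q))*B/(q*P) = 2*a*(B/P) := by
            intro a B P q hq hP; field_simp
          rw [hcdef, Real.mul_rpow hhalf0 hn0.le]
          exact (halg _ _ _ _ hnα.ne' hp2.ne').symm
      _ ≤ _ := by gcongr
  -- Limit of the lower bound
  have h14 : Tendsto (fun n : ℕ => ((n:ℝ))^(-(4:ℝ)⁻¹)) atTop (nhds 0) :=
    (tendsto_rpow_neg_atTop (by norm_num : (0:ℝ) < (4:ℝ)⁻¹)).comp tendsto_natCast_atTop_atTop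
  have h12 : Tendsto (fun n : ℕ => ((n:ℝ))^(-(2:ℝ)⁻¹)) atTop (nhds 0) :=
    (tendsto_rpow_neg_atTop (by norm_num : (0:ℝ) < (2:ℝ)⁻¹)).comp tendsto_natCast_atTop_atTop
  have hg : Tendsto (fun n : ℕ =>
      2*((1:ℝ)/2 - (n:ℝ)^(-(4:ℝ)⁻¹))^α * (1 - ((n:ℝ)^(-(2:ℝ)⁻¹))/2)) atTop
      (nhds (2*((1:ℝ)/2 - 0)^α * (1 - 0/2))) :=
    (tendsto_const_nhds.mul
      ((tendsto_const_nhds.sub h14).rpow_const (Or.inl (by norm_num)))).mul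
      (tendsto_const_nhds.sub (h12.div_const 2))
  have hgval : 2*((1:ℝ)/2 - 0)^α * (1 - 0/2) = (2:ℝ)^((1:ℝ)/(d:ℝ)) := by
    have h1 : ((1:ℝ)/2 - 0) = 2⁻¹ := by norm_num
    have h2 : ((2:ℝ)⁻¹)^α = 2^(-α) := by
      rw [Real.inv_rpow (by norm_num : (0:ℝ) ≤ 2), ← Real.rpow_neg (by norm_num : (0:ℝ) ≤ 2)]
    have h3 : (2:ℝ)*2^(-α) = 2^(1 + -α) := by
      rw [Real.rpow_add (by norm_num : (0:ℝ) < 2), Real.rpow_one]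
    have h4 : (1:ℝ) + -α = 1/(d:ℝ) := by rw [hαdef]; ring
    rw [h1, h2]
    rw [show (1:ℝ) - 0/2 = 1 from by norm_num, mul_one, h3, h4]
  rw [hgval] at hg
  refine tendsto_of_tendsto_of_tendsto_of_le_of_le' hg tendsto_const_nhds ?_ ?_
  · filter_upwards [eventually_ge_atTop 17] with n hn
    have h := hlower n hn
    rwa [Finset.sum_div] at h
  · filter_upwards [eventually_ge_atTop 2] with n hn
    have h := hupper n hn
    rwa [Finset.sum_div] at h
end

section
/- Let G be a simple graph on a finite vertex set V with |V| = n ≥ 3, and define a weight function w on unordered pairs of distinct vertices by w({u,v}) = n if {u,v} is an edge of G and w({u,v}) = 1 otherwise. If G contains a clique of size ℓ with ℓ ≥ 3, then there exists a proper bipartition V = R ∪ B such that mst_w(R) + mst_w(B) ≥ (ℓ − 2) · n. -/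
open scoped Classical

/-- The minimum, over all trees with vertex set `U`, of the sum of the weights `w`
of the edges of the tree (weights are given on unordered pairs). -/
noncomputable def mstW {V : Type*} (w : Sym2 V → ℝ) (U : Finset V) : ℝ :=
  sInf {c : ℝ | ∃ G : SimpleGraph U, G.IsTree ∧
    c = ∑ᶠ e ∈ G.edgeSet, w (e.map (fun v : U => (v : V)))}

section star
open SimpleGraph

/-- The star graph centered at `r`. -/
def starG {U : Type*} (r : U) : SimpleGraph U where
  Adj u v := u ≠ v ∧ (u = r ∨ v = r)
  symm := ⟨fun u v ⟨h1, h2⟩ => ⟨h1.symm, h2.symm⟩⟩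
  loopless := ⟨fun u ⟨h1, _⟩ => h1 rfl⟩

lemma starG_step {U : Type*} {r v x : U} (h : (starG r).Adj v x) (hv : v ≠ r) : x = r := by
  rcases h.2 with h1 | h1
  · exact absurd h1 hv
  · exact h1

lemma starG_from_r {U : Type*} {r w : U} (hw : w ≠ r) (p : (starG r).Walk r w)
    (hp : p.IsPath) : ∃ h : (starG r).Adj r w, p = Walk.cons h Walk.nil := by
  cases p with
  | nil => exact absurd rfl hw
  | @cons _ x _ h q =>
    rw [Walk.cons_isPath_iff] at hp
    obtain ⟨hq, hr⟩ := hp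
    by_cases hxw : x = w
    · subst hxw
      exact ⟨h, by rw [(Walk.isPath_iff_eq_nil (p := q)).mp hq]⟩
    · exfalso
      cases q with
      | nil => exact hxw rfl
      | @cons _ y _ h2 q2 =>
        apply hr
        rw [Walk.support_cons]
        exact List.mem_cons_of_mem _ (starG_step h2 (Ne.symm h.1) ▸ q2.start_mem_support)

lemma starG_uniq_from_r {U : Type*} {r w : U} (p q : (starG r).Walk r w)
    (hp : p.IsPath) (hq : q.IsPath) : p = q := by
  by_cases hw : w = r
  · subst hw
    rw [(Walk.isPath_iff_eq_nil (p := p)).mp hp, (Walk.isPath_iff_eq_nil (p := q)).mp hq]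
  · obtain ⟨h1, rfl⟩ := starG_from_r hw p hp
    obtain ⟨h2, rfl⟩ := starG_from_r hw q hq
    rfl

lemma starG_first {U : Type*} {r v w : U} (hv : v ≠ r) (hvw : v ≠ w)
    (p : (starG r).Walk v w) (hp : p.IsPath) :
    ∃ (h : (starG r).Adj v r) (q : (starG r).Walk r w),
      p = Walk.cons h q ∧ q.IsPath := by
  cases p with
  | nil => exact absurd rfl hvw
  | @cons _ x _ h q =>
    have hx : x = r := starG_step h hv
    subst hx
    rw [Walk.cons_isPath_iff] at hp
    exact ⟨h, q, rfl, hp.1⟩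

lemma starG_isTree {U : Type*} [Nonempty U] (r : U) : (starG r).IsTree := by
  rw [isTree_iff_existsUnique_path]
  refine ⟨‹_›, fun v w => ?_⟩
  have huniq : ∀ p q : (starG r).Walk v w, p.IsPath → q.IsPath → p = q := by
    intro p q hp hq
    by_cases hvw : v = w
    · subst hvw
      rw [(Walk.isPath_iff_eq_nil (p := p)).mp hp, (Walk.isPath_iff_eq_nil (p := q)).mp hq]
    · by_cases hv : v = r
      · subst hv; exact starG_uniq_from_r p q hp hq
      · obtain ⟨h1, p1, rfl, hp1⟩ := starG_first hv hvw p hp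
        obtain ⟨h2, q1, rfl, hq1⟩ := starG_first hv hvw q hq
        rw [starG_uniq_from_r p1 q1 hp1 hq1]
  -- existence
  by_cases hvw : v = w
  · subst hvw
    exact ⟨Walk.nil, Walk.IsPath.nil, fun q hq => huniq q Walk.nil hq Walk.IsPath.nil⟩
  · by_cases hv : v = r
    · subst hv
      refine ⟨Walk.cons ⟨hvw, Or.inl rfl⟩ Walk.nil, ?_, fun q hq => huniq q _ hq ?_⟩ <;>
        exact (Walk.cons_isPath_iff _ _).2 ⟨Walk.IsPath.nil, by simp [hvw]⟩
    · by_cases hw : w = r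
      · subst hw
        refine ⟨Walk.cons ⟨hv, Or.inr rfl⟩ Walk.nil, ?_, fun q hq => huniq q _ hq ?_⟩ <;>
          exact (Walk.cons_isPath_iff _ _).2 ⟨Walk.IsPath.nil, by simp [hv]⟩
      · refine ⟨Walk.cons ⟨hv, Or.inr rfl⟩ (Walk.cons ⟨Ne.symm hw, Or.inl rfl⟩ Walk.nil),
          ?_, fun q hq => huniq q _ hq ?_⟩ <;>
          exact (Walk.cons_isPath_iff _ _).2 ⟨(Walk.cons_isPath_iff _ _).2
            ⟨Walk.IsPath.nil, by simp [Ne.symm hw]⟩, by show v ∉ [r, w]; simp [hv, hvw]⟩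

lemma exists_isTree (U : Type*) [Nonempty U] : ∃ T : SimpleGraph U, T.IsTree :=
  ⟨starG (Classical.arbitrary U), starG_isTree _⟩

end star

theorem clique_gives_heavy_bipartition {V : Type*} [Fintype V] [DecidableEq V]
    (G : SimpleGraph V) (hn : 3 ≤ Fintype.card V)
    (w : Sym2 V → ℝ)
    (hw : ∀ u v : V, u ≠ v →
      w s(u, v) = if G.Adj u v then (Fintype.card V : ℝ) else 1)
    (ℓ : ℕ) (hℓ : 3 ≤ ℓ) (C : Finset V) (hCcard : C.card = ℓ)
    (hC : G.IsClique (C : Set V)) :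
    ∃ R B : Finset V, R.Nonempty ∧ B.Nonempty ∧ Disjoint R B ∧
      R ∪ B = Finset.univ ∧ ((ℓ : ℝ) - 2) * (Fintype.card V : ℝ) ≤ mstW w R + mstW w B := by
  set n : ℝ := (Fintype.card V : ℝ) with hn'
  have hn0 : (0:ℝ) ≤ n := by positivity
  -- weights are nonnegative
  have hwpos : ∀ u v : V, u ≠ v → 0 ≤ w s(u,v) := by
    intro u v huv
    rw [hw u v huv]
    split
    · exact hn0
    · norm_num
  obtain ⟨v₀, hv₀⟩ : C.Nonempty := Finset.card_pos.mp (by omega)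
  set R : Finset V := C.erase v₀ with hR
  set B : Finset V := Rᶜ with hB
  have hRcard : R.card = ℓ - 1 := by rw [hR, Finset.card_erase_of_mem hv₀, hCcard]
  have hRne : R.Nonempty := Finset.card_pos.mp (by omega)
  have hBne : B.Nonempty := ⟨v₀, by simp [hB, hR]⟩
  refine ⟨R, B, hRne, hBne, disjoint_compl_right, Finset.union_compl _, ?_⟩
  -- the value of any tree sum
  have htreesum : ∀ (T : SimpleGraph R), T.IsTree →
      (∑ᶠ e ∈ T.edgeSet, w (e.map (fun v : R => (v : V)))) = ((ℓ:ℝ) - 2) * n := by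
    intro T hT
    have hfin : T.edgeSet.Finite := Set.toFinite _
    letI := hfin.fintype
    rw [← SimpleGraph.coe_edgeFinset, finsum_mem_coe_finset]
    have hcardT : T.edgeFinset.card + 1 = Fintype.card R := hT.card_edgeFinset
    rw [Fintype.card_coe, hRcard] at hcardT
    have hconst : ∀ e ∈ T.edgeFinset, w (e.map (fun v : R => (v : V))) = n := by
      intro e he
      induction e using Sym2.ind with
      | _ a b =>
        rw [SimpleGraph.mem_edgeFinset, SimpleGraph.mem_edgeSet] at he
        have hab : (a : V) ≠ (b : V) := Subtype.coe_injective.ne he.ne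
        have haC : (a : V) ∈ (C : Set V) := Finset.mem_coe.mpr (Finset.erase_subset _ _ a.2)
        have hbC : (b : V) ∈ (C : Set V) := Finset.mem_coe.mpr (Finset.erase_subset _ _ b.2)
        rw [Sym2.map_pair_eq, hw _ _ hab, if_pos (hC haC hbC hab)]
    rw [Finset.sum_congr rfl hconst, Finset.sum_const, nsmul_eq_mul]
    congr 1
    have : T.edgeFinset.card = ℓ - 2 := by omega
    rw [this]
    push_cast [Nat.cast_sub (by omega : 2 ≤ ℓ)]
    ring
  -- lower bound for R
  have hRset : {c : ℝ | ∃ T : SimpleGraph R, T.IsTree ∧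
      c = ∑ᶠ e ∈ T.edgeSet, w (e.map (fun v : R => (v : V)))}.Nonempty := by
    haveI : Nonempty R := ⟨⟨hRne.choose, hRne.choose_spec⟩⟩
    obtain ⟨T, hT⟩ := exists_isTree R
    exact ⟨_, T, hT, rfl⟩
  have hmstR : ((ℓ:ℝ) - 2) * n ≤ mstW w R := by
    apply le_csInf hRset
    rintro c ⟨T, hT, rfl⟩
    rw [htreesum T hT]
  -- lower bound for B
  have hmstB : 0 ≤ mstW w B := by
    apply Real.sInf_nonneg
    rintro c ⟨T, hT, rfl⟩
    have hfin : T.edgeSet.Finite := Set.toFinite _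
    letI := hfin.fintype
    rw [← SimpleGraph.coe_edgeFinset, finsum_mem_coe_finset]
    apply Finset.sum_nonneg
    intro e he
    induction e using Sym2.ind with
    | _ a b =>
      rw [SimpleGraph.mem_edgeFinset, SimpleGraph.mem_edgeSet] at he
      have hab : (a : V) ≠ (b : V) := Subtype.coe_injective.ne he.ne
      rw [Sym2.map_pair_eq]
      exact hwpos _ _ hab
  linarith
end

section
/- Let G be a simple graph on a finite vertex set V with |V| = n ≥ 3, and define a weight function w on unordered pairs of distinct vertices by w({u,v}) = n if {u,v} is an edge of G and w({u,v}) = 1 otherwise. If V = R ∪ B is a proper bipartition with mst_w(R) + mst_w(B) = k, then G contains a clique of size at least ⌊k/n⌋/2 + 1. -/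
open scoped Classical

section ParentTree

variable {α : Type*} (r : α) (P : α → α)

/-- The graph whose edges join each non-root vertex to its parent. -/
def parentGraph : SimpleGraph α := SimpleGraph.fromRel (fun x y => x ≠ r ∧ P x = y)

lemma parentGraph_adj {x y : α} :
    (parentGraph r P).Adj x y ↔ x ≠ y ∧ ((x ≠ r ∧ P x = y) ∨ (y ≠ r ∧ P y = x)) := by
  simp [parentGraph, SimpleGraph.fromRel_adj]

lemma parentGraph_reachable (h : α → ℕ) (hP : ∀ v, v ≠ r → h (P v) < h v) (x : α) :
    (parentGraph r P).Reachable x r := by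
  suffices hgen : ∀ (n : ℕ) (x : α), h x = n → (parentGraph r P).Reachable x r from
    hgen (h x) x rfl
  intro n
  induction n using Nat.strong_induction_on with
  | _ n IH =>
  intro x hx
  by_cases hxr : x = r
  · exact hxr ▸ SimpleGraph.Reachable.refl _
  · have h1 : (parentGraph r P).Adj x (P x) := by
      rw [parentGraph_adj]
      refine ⟨fun he => ?_, Or.inl ⟨hxr, rfl⟩⟩
      have h2 := hP x hxr
      rw [← he] at h2
      exact lt_irrefl _ h2
    exact h1.reachable.trans (IH (h (P x)) (hx ▸ hP x hxr) (P x) rfl)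

lemma parentGraph_no_return (h : α → ℕ) (hr : P r = r) (hP : ∀ v, v ≠ r → h (P v) < h v) :
    ∀ (n : ℕ) (x : α), P^[n] x = r ∨ h (P^[n] x) + n ≤ h x := by
  intro n
  induction n with
  | zero => intro x; right; simp
  | succ n IH =>
    intro x
    rcases IH x with h1 | h1
    · left; rw [Function.iterate_succ_apply', h1, hr]
    · by_cases h2 : P^[n] x = r
      · left; rw [Function.iterate_succ_apply', h2, hr]
      · right
        rw [Function.iterate_succ_apply']
        have := hP _ h2
        omega

lemma parentGraph_isAcyclic (h : α → ℕ) (hr : P r = r) (hP : ∀ v, v ≠ r → h (P v) < h v) :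
    (parentGraph r P).IsAcyclic := by
  rw [SimpleGraph.isAcyclic_iff_forall_adj_isBridge]
  have key : ∀ v : α, v ≠ r →
      ¬((parentGraph r P) \ SimpleGraph.fromEdgeSet {s(v, P v)}).Reachable v (P v) := by
    intro v hv hreach
    set S : Set α := {x | ∃ n, P^[n] x = v} with hS
    have hvS : v ∈ S := ⟨0, rfl⟩
    have hclosed : ∀ x y, ((parentGraph r P) \ SimpleGraph.fromEdgeSet {s(v, P v)}).Adj x y →
        x ∈ S → y ∈ S := by
      intro x y hxy hx
      rw [SimpleGraph.sdiff_adj, parentGraph_adj, SimpleGraph.fromEdgeSet_adj] at hxy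
      obtain ⟨⟨hne, hor⟩, hnot⟩ := hxy
      obtain ⟨n, hn⟩ := hx
      rcases hor with ⟨hxr, hPx⟩ | ⟨hyr, hPy⟩
      · cases n with
        | zero =>
          simp only [Function.iterate_zero, id_eq] at hn
          subst hn
          exact absurd ⟨by rw [hPx]; exact rfl, hne⟩ hnot
        | succ n =>
          refine ⟨n, ?_⟩
          rw [← hPx]
          rw [Function.iterate_succ_apply] at hn
          exact hn
      · exact ⟨n + 1, by rw [Function.iterate_succ_apply, hPy, hn]⟩
    have hwalk : ∀ (x y : α)
        (_ : ((parentGraph r P) \ SimpleGraph.fromEdgeSet {s(v, P v)}).Walk x y),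
        x ∈ S → y ∈ S := by
      intro x y p
      induction p with
      | nil => exact id
      | cons hadj p ih => exact fun hx => ih (hclosed _ _ hadj hx)
    obtain ⟨p⟩ := hreach
    obtain ⟨n, hn⟩ := hwalk _ _ p hvS
    have hiter : P^[n + 1] v = v := by rw [Function.iterate_succ_apply, hn]
    rcases parentGraph_no_return r P h hr hP (n + 1) v with h1 | h1
    · exact hv (by rw [hiter] at h1; exact h1)
    · rw [hiter] at h1; omega
  intro x y hxy
  rw [SimpleGraph.isBridge_iff]
  rw [parentGraph_adj] at hxy
  obtain ⟨hne, hor⟩ := hxy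
  rcases hor with ⟨hxr, hPx⟩ | ⟨hyr, hPy⟩
  · subst hPx; exact key x hxr
  · subst hPy
    intro hreach
    refine key y hyr ?_
    have hswap : s(P y, y) = s(y, P y) := Sym2.eq_swap
    rw [hswap] at hreach
    exact hreach.symm

lemma parentGraph_isTree [Nonempty α] (h : α → ℕ) (hr : P r = r)
    (hP : ∀ v, v ≠ r → h (P v) < h v) : (parentGraph r P).IsTree := by
  refine ⟨⟨fun x y => ?_⟩, parentGraph_isAcyclic r P h hr hP⟩
  exact (parentGraph_reachable r P h hP x).trans (parentGraph_reachable r P h hP y).symm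

end ParentTree

lemma mstW_mem_nonneg {V : Type*} [Fintype V] [DecidableEq V]
    (G : SimpleGraph V) (w : Sym2 V → ℝ)
    (hw : ∀ u v : V, u ≠ v →
      w s(u, v) = if G.Adj u v then (Fintype.card V : ℝ) else 1)
    (U : Finset V) :
    ∀ c ∈ {c : ℝ | ∃ H : SimpleGraph U, H.IsTree ∧
      c = ∑ᶠ e ∈ H.edgeSet, w (e.map (fun v : U => (v : V)))}, (0 : ℝ) ≤ c := by
  rintro c ⟨H, -, rfl⟩
  haveI : Fintype H.edgeSet := Fintype.ofFinite _
  rw [← SimpleGraph.coe_edgeFinset, finsum_mem_coe_finset]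
  refine Finset.sum_nonneg fun e he => ?_
  rw [SimpleGraph.mem_edgeFinset] at he
  revert he
  refine Sym2.inductionOn e fun x y he => ?_
  have hne : (x : V) ≠ (y : V) := fun hxy => H.ne_of_adj he (Subtype.ext hxy)
  rw [Sym2.map_pair_eq, hw _ _ hne]
  split
  · positivity
  · norm_num

lemma mstW_le_clique {V : Type*} [Fintype V] [DecidableEq V]
    (G : SimpleGraph V) (w : Sym2 V → ℝ)
    (hw : ∀ u v : V, u ≠ v →
      w s(u, v) = if G.Adj u v then (Fintype.card V : ℝ) else 1)
    (U C : Finset V) (hCU : C ⊆ U) (hC : C.Nonempty)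
    (hclique : G.IsClique (C : Set V))
    (hmax : ∀ v ∈ U, v ∉ C → ∃ c ∈ C, ¬G.Adj v c) :
    mstW w U ≤ ((U.card : ℝ) - C.card) + (Fintype.card V : ℝ) * ((C.card : ℝ) - 1) := by
  classical
  obtain ⟨c0, hc0⟩ := hC
  have hex : ∀ v : V, ∃ c : V, v ∈ U → v ∉ C → c ∈ C ∧ ¬G.Adj v c := by
    intro v
    by_cases h : v ∈ U ∧ v ∉ C
    · obtain ⟨c, hc, hnc⟩ := hmax v h.1 h.2
      exact ⟨c, fun _ _ => ⟨hc, hnc⟩⟩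
    · exact ⟨c0, fun h1 h2 => absurd ⟨h1, h2⟩ h⟩
  choose f hf using hex
  set p : V → V := fun v => if v ∈ C then c0 else f v with hp
  have hpU : ∀ v : U, p (v : V) ∈ U := by
    intro v
    by_cases h : (v : V) ∈ C
    · simpa [hp, h] using hCU hc0
    · simpa [hp, h] using hCU (hf (v : V) v.2 h).1
  set root : U := ⟨c0, hCU hc0⟩ with hroot
  set P : U → U := fun v => ⟨p (v : V), hpU v⟩ with hP
  have hPC : ∀ v : U, (P v : V) ∈ C := by
    intro v
    by_cases h : (v : V) ∈ C
    · simpa [hP, hp, h] using hc0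
    · simpa [hP, hp, h] using (hf (v : V) v.2 h).1
  have hProot : ∀ v : U, (v : V) ∈ C → P v = root := by
    intro v h
    simp [hP, hp, h, hroot]
  set h : U → ℕ := fun v => if v = root then 0 else if (v : V) ∈ C then 1 else 2 with hh
  have hr : P root = root := hProot root hc0
  have hPdec : ∀ v : U, v ≠ root → h (P v) < h v := by
    intro v hv
    by_cases hvC : (v : V) ∈ C
    · rw [hProot v hvC]
      simp [hh, hv, hvC]
    · have h1 : (P v : V) ∈ C := hPC v
      have h2 : h (P v) ≤ 1 := by
        by_cases h3 : P v = root <;> simp [hh, h3, h1]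
      have h4 : h v = 2 := by simp [hh, hv, hvC]
      omega
  haveI : Nonempty U := ⟨root⟩
  set H : SimpleGraph U := parentGraph root P with hHdef
  have htree : H.IsTree := parentGraph_isTree root P h hr hPdec
  have hPne : ∀ v : U, v ≠ root → P v ≠ v := by
    intro v hv he
    have := hPdec v hv
    rw [he] at this
    exact lt_irrefl _ this
  set T : Finset U := Finset.univ.filter (fun v => v ≠ root) with hT
  set φ : U → Sym2 U := fun v => s(v, P v) with hφ
  haveI : Fintype H.edgeSet := Fintype.ofFinite _
  have hEdge : H.edgeFinset = T.image φ := by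
    ext e
    rw [SimpleGraph.mem_edgeFinset]
    constructor
    · revert e
      refine Sym2.ind fun x y he => ?_
      rw [SimpleGraph.mem_edgeSet, hHdef, parentGraph_adj] at he
      obtain ⟨hne, hor⟩ := he
      rcases hor with ⟨hxr, hPx⟩ | ⟨hyr, hPy⟩
      · exact Finset.mem_image.2 ⟨x, by simp [hT, hxr],
          by simp only [hφ]; rw [hPx]⟩
      · exact Finset.mem_image.2 ⟨y, by simp [hT, hyr],
          by simp only [hφ]; rw [hPy]; exact Sym2.eq_swap⟩
    · intro he
      obtain ⟨v, hvT, rfl⟩ := Finset.mem_image.1 he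
      have hv : v ≠ root := (Finset.mem_filter.1 hvT).2
      rw [hφ]
      show s(v, P v) ∈ H.edgeSet
      rw [SimpleGraph.mem_edgeSet, hHdef, parentGraph_adj]
      exact ⟨(hPne v hv).symm, Or.inl ⟨hv, rfl⟩⟩
  have hinj : ∀ x ∈ T, ∀ y ∈ T, φ x = φ y → x = y := by
    intro x hx y hy hxy
    simp only [hφ] at hxy
    rw [Sym2.eq_iff] at hxy
    rcases hxy with ⟨h1, _⟩ | ⟨h1, h2⟩
    · exact h1
    · exfalso
      have hxC : (x : V) ∈ C := h1 ▸ hPC y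
      have : P x = root := hProot x hxC
      rw [this] at h2
      exact (Finset.mem_filter.1 hy).2 h2.symm
  have hvalue : (∑ᶠ e ∈ H.edgeSet, w (e.map (fun v : U => (v : V))))
      = ((U.card : ℝ) - C.card) + (Fintype.card V : ℝ) * ((C.card : ℝ) - 1) := by
    rw [← SimpleGraph.coe_edgeFinset, finsum_mem_coe_finset, hEdge,
      Finset.sum_image hinj]
    have hsplit := Finset.sum_filter_add_sum_filter_not T (fun v : U => (v : V) ∈ C)
      (fun v => w ((φ v).map (fun v : U => (v : V))))
    rw [← hsplit]
    have hterm1 : ∀ v ∈ T.filter (fun v : U => (v : V) ∈ C),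
        w ((φ v).map (fun v : U => (v : V))) = (Fintype.card V : ℝ) := by
      intro v hv
      rw [Finset.mem_filter] at hv
      obtain ⟨hvT, hvC⟩ := hv
      have hvr : v ≠ root := (Finset.mem_filter.1 hvT).2
      have hvc0 : (v : V) ≠ c0 := fun hvc => hvr (Subtype.ext hvc)
      simp only [hφ, Sym2.map_pair_eq]
      show w s((v : V), p (v : V)) = _
      have hpv : p (v : V) = c0 := by simp [hp, hvC]
      rw [hpv, hw _ _ hvc0,
        if_pos (hclique hvC hc0 hvc0)]
    have hterm2 : ∀ v ∈ T.filter (fun v : U => ¬(v : V) ∈ C),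
        w ((φ v).map (fun v : U => (v : V))) = 1 := by
      intro v hv
      rw [Finset.mem_filter] at hv
      obtain ⟨hvT, hvC⟩ := hv
      have hfv := hf (v : V) v.2 hvC
      have hPv : p (v : V) = f (v : V) := by simp [hp, hvC]
      have hne : (v : V) ≠ f (v : V) := fun he => hvC (he ▸ hfv.1)
      simp only [hφ, Sym2.map_pair_eq]
      show w s((v : V), p (v : V)) = _
      rw [hPv, hw _ _ hne, if_neg hfv.2]
    rw [Finset.sum_congr rfl hterm1, Finset.sum_congr rfl hterm2,
      Finset.sum_const, Finset.sum_const]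
    have hcard1 : (T.filter (fun v : U => (v : V) ∈ C)).card = C.card - 1 := by
      have himg : (T.filter (fun v : U => (v : V) ∈ C)).image (fun v : U => (v : V))
          = C.erase c0 := by
        ext z
        simp only [Finset.mem_image, Finset.mem_filter, Finset.mem_erase, hT,
          Finset.mem_filter, Finset.mem_univ, true_and]
        constructor
        · rintro ⟨v, ⟨hvr, hvC⟩, rfl⟩
          exact ⟨fun hz => hvr (Subtype.ext hz), hvC⟩
        · rintro ⟨hz, hzC⟩
          exact ⟨⟨z, hCU hzC⟩, ⟨fun hzr => hz (congrArg Subtype.val hzr), hzC⟩, rfl⟩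
      have := Finset.card_image_of_injOn
        (f := fun v : U => (v : V)) (s := T.filter (fun v : U => (v : V) ∈ C))
        (fun a _ b _ hab => Subtype.ext hab)
      rw [himg] at this
      rw [← this, Finset.card_erase_of_mem hc0]
    have hcard2 : (T.filter (fun v : U => ¬(v : V) ∈ C)).card = U.card - C.card := by
      have himg : (T.filter (fun v : U => ¬(v : V) ∈ C)).image (fun v : U => (v : V))
          = U \ C := by
        ext z
        simp only [Finset.mem_image, Finset.mem_filter, Finset.mem_sdiff, hT,
          Finset.mem_filter, Finset.mem_univ, true_and]
        constructor
        · rintro ⟨v, ⟨hvr, hvC⟩, rfl⟩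
          exact ⟨v.2, hvC⟩
        · rintro ⟨hzU, hzC⟩
          refine ⟨⟨z, hzU⟩, ⟨fun hzr => hzC ?_, hzC⟩, rfl⟩
          have : z = c0 := congrArg Subtype.val hzr
          exact this ▸ hc0
      have := Finset.card_image_of_injOn
        (f := fun v : U => (v : V)) (s := T.filter (fun v : U => ¬(v : V) ∈ C))
        (fun a _ b _ hab => Subtype.ext hab)
      rw [himg] at this
      rw [← this, Finset.card_sdiff_of_subset hCU]
    rw [hcard1, hcard2]
    have hC1 : 1 ≤ C.card := Finset.card_pos.2 ⟨c0, hc0⟩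
    have hCU' : C.card ≤ U.card := Finset.card_le_card hCU
    rw [nsmul_eq_mul, nsmul_eq_mul, Nat.cast_sub hC1, Nat.cast_sub hCU']
    push_cast
    ring
  have hmem : ((U.card : ℝ) - C.card) + (Fintype.card V : ℝ) * ((C.card : ℝ) - 1)
      ∈ {c : ℝ | ∃ H : SimpleGraph U, H.IsTree ∧
        c = ∑ᶠ e ∈ H.edgeSet, w (e.map (fun v : U => (v : V)))} :=
    ⟨H, htree, hvalue.symm⟩
  exact csInf_le ⟨0, fun c hc => mstW_mem_nonneg G w hw U c hc⟩ hmem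

theorem heavy_bipartition_gives_clique {V : Type*} [Fintype V] [DecidableEq V]
    (G : SimpleGraph V) (hn : 3 ≤ Fintype.card V)
    (w : Sym2 V → ℝ)
    (hw : ∀ u v : V, u ≠ v →
      w s(u, v) = if G.Adj u v then (Fintype.card V : ℝ) else 1)
    (R B : Finset V) (hR : R.Nonempty) (hB : B.Nonempty) (hRB : Disjoint R B)
    (hU : R ∪ B = Finset.univ) (k : ℝ) (hk : mstW w R + mstW w B = k) :
    ∃ C : Finset V, G.IsClique (C : Set V) ∧
      ((⌊k / (Fintype.card V : ℝ)⌋ : ℝ) / 2 + 1) ≤ (C.card : ℝ) := by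
  classical
  -- pick maximum cliques inside R and B
  have pick : ∀ (S : Finset V), S.Nonempty → ∃ C : Finset V, C ⊆ S ∧ C.Nonempty ∧
      G.IsClique (C : Set V) ∧ ∀ v ∈ S, v ∉ C → ∃ c ∈ C, ¬G.Adj v c := by
    intro S hS
    obtain ⟨s, hs⟩ := hS
    set 𝒞 : Finset (Finset V) :=
      S.powerset.filter (fun C => G.IsClique (C : Set V) ∧ C.Nonempty) with h𝒞
    have h1 : {s} ∈ 𝒞 := by
      rw [h𝒞, Finset.mem_filter, Finset.mem_powerset]
      refine ⟨Finset.singleton_subset_iff.2 hs, ?_, Finset.singleton_nonempty s⟩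
      rw [Finset.coe_singleton]
      exact G.isClique_singleton s
    obtain ⟨C, hC𝒞, hCmax⟩ := Finset.exists_max_image 𝒞 Finset.card ⟨{s}, h1⟩
    rw [h𝒞, Finset.mem_filter, Finset.mem_powerset] at hC𝒞
    obtain ⟨hCS, hCcl, hCne⟩ := hC𝒞
    refine ⟨C, hCS, hCne, hCcl, ?_⟩
    intro v hvS hvC
    by_contra hcon
    push_neg at hcon
    have hins : G.IsClique ((insert v C : Finset V) : Set V) := by
      rw [Finset.coe_insert]
      exact hCcl.insert (fun b hb _ => hcon b hb)
    have hmem : insert v C ∈ 𝒞 := by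
      rw [h𝒞, Finset.mem_filter, Finset.mem_powerset]
      exact ⟨Finset.insert_subset hvS hCS, hins, Finset.insert_nonempty _ _⟩
    have := hCmax _ hmem
    rw [Finset.card_insert_of_notMem hvC] at this
    omega
  obtain ⟨CR, hCRsub, hCRne, hCRcl, hCRmax⟩ := pick R hR
  obtain ⟨CB, hCBsub, hCBne, hCBcl, hCBmax⟩ := pick B hB
  set n : ℕ := Fintype.card V with hn'
  have hbR := mstW_le_clique G w hw R CR hCRsub hCRne hCRcl hCRmax
  have hbB := mstW_le_clique G w hw B CB hCBsub hCBne hCBcl hCBmax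
  set a : ℕ := CR.card with ha
  set b : ℕ := CB.card with hb
  have ha1 : 1 ≤ a := Finset.card_pos.2 hCRne
  have hb1 : 1 ≤ b := Finset.card_pos.2 hCBne
  have hRa : a ≤ R.card := Finset.card_le_card hCRsub
  have hBb : b ≤ B.card := Finset.card_le_card hCBsub
  have hsum : R.card + B.card = n := by
    rw [← Finset.card_union_of_disjoint hRB, hU, hn', Finset.card_univ]
  have hn0 : (0 : ℝ) < (n : ℝ) := by
    have : 0 < n := lt_of_lt_of_le (by norm_num) hn
    exact_mod_cast this
  -- k < n * (a + b - 1)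
  have hklt : k < (n : ℝ) * ((a : ℝ) + b - 1) := by
    have h1 : k ≤ ((R.card : ℝ) - a) + (n : ℝ) * ((a : ℝ) - 1)
        + (((B.card : ℝ) - b) + (n : ℝ) * ((b : ℝ) - 1)) := by
      rw [← hk]; exact add_le_add hbR hbB
    have h2 : (R.card : ℝ) + (B.card : ℝ) = (n : ℝ) := by exact_mod_cast hsum
    have ha1' : (1 : ℝ) ≤ (a : ℝ) := by exact_mod_cast ha1
    have hb1' : (1 : ℝ) ≤ (b : ℝ) := by exact_mod_cast hb1
    nlinarith [hn0]
  have hfloor : (⌊k / (n : ℝ)⌋ : ℝ) ≤ (a : ℝ) + b - 2 := by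
    have h1 : ⌊k / (n : ℝ)⌋ < (a : ℤ) + b - 1 := by
      rw [Int.floor_lt, div_lt_iff₀ hn0]
      push_cast
      linarith [hklt]
    have h2 : ⌊k / (n : ℝ)⌋ ≤ (a : ℤ) + b - 2 := by omega
    exact_mod_cast h2
  by_cases hab : a ≤ b
  · refine ⟨CB, hCBcl, ?_⟩
    have : (a : ℝ) ≤ (b : ℝ) := by exact_mod_cast hab
    rw [← hb]
    linarith [hfloor]
  · refine ⟨CR, hCRcl, ?_⟩
    have : (b : ℝ) ≤ (a : ℝ) := by exact_mod_cast (le_of_not_ge hab)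
    rw [← ha]
    linarith [hfloor]
end
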